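/- arXiv:math/0307352 — 6 statements merged into one kernel-verified Lean document; each statement's English description precedes it below -/
import Mathlib

section
/- For fixed squarefree n, the function m ↦ μ(n)·c_n(m) is a multiplicative function of m. -/
open ArithmeticFunction Finset
open scoped ArithmeticFunction.zeta

lemma orthIcc (N m : ℕ) (hN : 0 < N) :
    ∑ j ∈ Finset.Icc 1 N, Complex.exp (2 * Real.pi * Complex.I * m * j / N) =
      if N ∣ m then (N : ℂ) else 0 := by
  have hNC : (N : ℂ) ≠ 0 := Nat.cast_ne_zero.mpr hN.ne'
  set z : ℂ := Complex.exp (2 * Real.pi * Complex.I / N) with hz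
  have hprim : IsPrimitiveRoot z N := Complex.isPrimitiveRoot_exp N hN.ne'
  have hterm : ∀ j : ℕ, Complex.exp (2 * Real.pi * Complex.I * m * j / N) = (z ^ m) ^ j := by
    intro j
    rw [← Complex.exp_nat_mul, ← Complex.exp_nat_mul]
    congr 1
    field_simp
  simp_rw [hterm]
  have hNpow : (z ^ m) ^ N = 1 := by
    rw [← pow_mul, mul_comm, pow_mul, hprim.pow_eq_one, one_pow]
  rw [← Finset.Ico_add_one_right_eq_Icc, Finset.sum_Ico_eq_sum_range]
  by_cases hdvd : N ∣ m
  · have h1 : z ^ m = 1 := hprim.pow_eq_one_iff_dvd m |>.mpr hdvd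
    simp [h1, hdvd]
  · have hne : z ^ m ≠ 1 := fun h => hdvd ((hprim.pow_eq_one_iff_dvd m).mp h)
    rw [if_neg hdvd]
    have : ∀ i : ℕ, (z ^ m) ^ (1 + i) = (z ^ m) * ((z ^ m)) ^ i := by
      intro i; rw [pow_add, pow_one]
    simp_rw [this]
    rw [← Finset.mul_sum, geom_sum_eq hne, Nat.add_sub_cancel, hNpow]
    simp

noncomputable def ramanujanSum (n m : ℕ) : ℂ :=
  ∑ k ∈ (Finset.Icc 1 n).filter (fun k => Nat.Coprime k n),
    Complex.exp (2 * Real.pi * Complex.I * m * k / n)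

lemma moebius_indicator (g : ℕ) :
    ∑ d ∈ g.divisors, (moebius d : ℂ) = if g = 1 then 1 else 0 := by
  calc ∑ d ∈ g.divisors, (moebius d : ℂ)
      = ∑ d ∈ g.divisors, ((moebius : ArithmeticFunction ℤ) : ArithmeticFunction ℂ) d := by
        simp [intCoe_apply]
    _ = (((moebius : ArithmeticFunction ℤ) : ArithmeticFunction ℂ) * ζ) g :=
        coe_mul_zeta_apply.symm
    _ = (1 : ArithmeticFunction ℂ) g := by rw [coe_moebius_mul_coe_zeta]
    _ = if g = 1 then 1 else 0 := one_apply

lemma divisors_gcd_eq (n k : ℕ) (hn : n ≠ 0) :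
    (Nat.gcd k n).divisors = n.divisors.filter (· ∣ k) := by
  ext d
  simp only [Nat.mem_divisors, Finset.mem_filter]
  constructor
  · rintro ⟨hd, -⟩
    exact ⟨⟨hd.trans (Nat.gcd_dvd_right k n), hn⟩, hd.trans (Nat.gcd_dvd_left k n)⟩
  · rintro ⟨⟨hdn, -⟩, hdk⟩
    exact ⟨Nat.dvd_gcd hdk hdn, Nat.gcd_ne_zero_right hn⟩

lemma ramanujanSum_eq (n m : ℕ) (hn : 0 < n) :
    ramanujanSum n m =
      ∑ e ∈ (Nat.gcd n m).divisors, (moebius (n / e) : ℂ) * e := by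
  have hn0 : n ≠ 0 := hn.ne'
  set f : ℕ → ℂ := fun k => Complex.exp (2 * Real.pi * Complex.I * m * k / n) with hf
  have step1 : ramanujanSum n m
      = ∑ k ∈ Finset.Icc 1 n, (∑ d ∈ (Nat.gcd k n).divisors, (moebius d : ℂ)) * f k := by
    rw [ramanujanSum, Finset.sum_filter]
    refine Finset.sum_congr rfl fun k hk => ?_
    rw [moebius_indicator]
    by_cases h : Nat.Coprime k n
    · rw [if_pos h, if_pos h, one_mul]
    · rw [if_neg h, if_neg h, zero_mul]
  have step2 : ramanujanSum n m
      = ∑ d ∈ n.divisors, ∑ k ∈ (Finset.Icc 1 n).filter (d ∣ ·), (moebius d : ℂ) * f k := by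
    rw [step1]
    simp_rw [divisors_gcd_eq n _ hn0, Finset.sum_filter, Finset.sum_mul]
    rw [Finset.sum_comm]
    refine Finset.sum_congr rfl fun d _ => ?_
    refine Finset.sum_congr rfl fun k _ => ?_
    rw [ite_mul, zero_mul]
  have step3 : ∀ d ∈ n.divisors,
      ∑ k ∈ (Finset.Icc 1 n).filter (d ∣ ·), f k
        = if (n / d) ∣ m then ((n / d : ℕ) : ℂ) else 0 := by
    intro d hd
    rw [Nat.mem_divisors] at hd
    obtain ⟨hdn, -⟩ := hd
    have hd0 : d ≠ 0 := by rintro rfl; exact hn0 (Nat.eq_zero_of_zero_dvd hdn)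
    set N := n / d with hN
    have hdN : d * N = n := Nat.mul_div_cancel' hdn
    have hN0 : 0 < N := Nat.div_pos (Nat.le_of_dvd hn hdn) (Nat.pos_of_ne_zero hd0)
    have hbij : ∑ k ∈ (Finset.Icc 1 n).filter (d ∣ ·), f k
        = ∑ j ∈ Finset.Icc 1 N, f (d * j) := by
      refine Finset.sum_nbij' (fun k => k / d) (fun j => d * j) ?_ ?_ ?_ ?_ ?_
      · intro k hk
        simp only [Finset.mem_filter, Finset.mem_Icc] at hk ⊢
        obtain ⟨⟨hk1, hkn⟩, hdk⟩ := hk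
        constructor
        · exact Nat.one_le_div_iff (Nat.pos_of_ne_zero hd0) |>.mpr (Nat.le_of_dvd hk1 hdk)
        · rw [hN]; exact Nat.div_le_div_right hkn
      · intro j hj
        simp only [Finset.mem_filter, Finset.mem_Icc] at hj ⊢
        refine ⟨⟨?_, ?_⟩, dvd_mul_right d j⟩
        · have : 1 ≤ j := hj.1
          have : 1 ≤ d := Nat.one_le_iff_ne_zero.mpr hd0
          nlinarith
        · calc d * j ≤ d * N := Nat.mul_le_mul_left d hj.2
            _ = n := hdN
      · intro k hk
        simp only [Finset.mem_filter] at hk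
        exact Nat.mul_div_cancel' hk.2
      · intro j hj
        exact Nat.mul_div_cancel_left j (Nat.pos_of_ne_zero hd0)
      · intro k hk
        simp only [Finset.mem_filter] at hk
        rw [Nat.mul_div_cancel' hk.2]
    rw [hbij]
    have hfd : ∀ j : ℕ, f (d * j) = Complex.exp (2 * Real.pi * Complex.I * m * j / N) := by
      intro j
      have hnC : (n : ℂ) = (d : ℂ) * N := by rw [← hdN]; push_cast; ring
      have hdC : (d : ℂ) ≠ 0 := Nat.cast_ne_zero.mpr hd0
      have hNC : (N : ℂ) ≠ 0 := Nat.cast_ne_zero.mpr hN0.ne'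
      simp only [hf]
      congr 1
      rw [hnC]
      push_cast
      field_simp
    simp_rw [hfd]
    exact orthIcc N m hN0
  have step4 : ramanujanSum n m
      = ∑ d ∈ n.divisors, (moebius d : ℂ) * (if (n / d) ∣ m then ((n / d : ℕ) : ℂ) else 0) := by
    rw [step2]
    refine Finset.sum_congr rfl fun d hd => ?_
    rw [← Finset.mul_sum, step3 d hd]
  rw [step4]
  calc ∑ d ∈ n.divisors, (moebius d : ℂ) * (if (n / d) ∣ m then ((n / d : ℕ) : ℂ) else 0)
      = ∑ d ∈ n.divisors,
          ((moebius (n / (n / d)) : ℂ) * (if (n / d) ∣ m then ((n / d : ℕ) : ℂ) else 0)) := by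
        refine Finset.sum_congr rfl fun d hd => ?_
        rw [Nat.div_div_self (Nat.mem_divisors.mp hd).1 hn0]
    _ = ∑ e ∈ n.divisors, (moebius (n / e) : ℂ) * (if e ∣ m then (e : ℂ) else 0) :=
        Nat.sum_div_divisors n (fun e => (moebius (n / e) : ℂ) * (if e ∣ m then (e : ℂ) else 0))
    _ = ∑ e ∈ n.divisors.filter (· ∣ m), (moebius (n / e) : ℂ) * e := by
        rw [Finset.sum_filter]
        refine Finset.sum_congr rfl fun e _ => ?_
        rw [mul_ite, mul_zero]
    _ = ∑ e ∈ (Nat.gcd n m).divisors, (moebius (n / e) : ℂ) * e := by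
        rw [Nat.gcd_comm, divisors_gcd_eq n m hn0]

lemma moebius_mul_sum (n g : ℕ) (hn : 0 < n) (hsq : Squarefree n) (hg : g ∣ n) :
    (moebius n : ℂ) * ∑ e ∈ g.divisors, (moebius (n / e) : ℂ) * e
      = ∑ e ∈ g.divisors, (moebius e : ℂ) * e := by
  rw [Finset.mul_sum]
  refine Finset.sum_congr rfl fun e he => ?_
  have hen : e ∣ n := (Nat.mem_divisors.mp he).1.trans hg
  have hmul : e * (n / e) = n := Nat.mul_div_cancel' hen
  have hcop : Nat.Coprime e (n / e) := by
    apply Nat.coprime_of_squarefree_mul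
    rwa [hmul]
  have hμ : moebius n = moebius e * moebius (n / e) := by
    conv_lhs => rw [← hmul]
    exact isMultiplicative_moebius.map_mul_of_coprime hcop
  have hsq' : Squarefree (n / e) := hsq.squarefree_of_dvd (Nat.div_dvd_of_dvd hen)
  have h2 : moebius (n / e) * moebius (n / e) = 1 := by
    have := moebius_sq_eq_one_of_squarefree hsq'
    rwa [sq] at this
  have : (moebius n : ℂ) * (moebius (n / e) : ℂ) = (moebius e : ℂ) := by
    have : ((moebius e * moebius (n / e) : ℤ) : ℂ) * (moebius (n / e) : ℂ)
        = (moebius e : ℂ) * ((moebius (n / e) * moebius (n / e) : ℤ) : ℂ) := by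
      push_cast; ring
    rw [hμ, this, h2]
    simp
  rw [← mul_assoc, this]

theorem ramanujanSum_multiplicative_in_m (n : ℕ) (hn : 0 < n) (hsq : Squarefree n) :
    (moebius n : ℂ) * ramanujanSum n 1 = 1 ∧
    ∀ a b : ℕ, 0 < a → 0 < b → Nat.Coprime a b →
      (moebius n : ℂ) * ramanujanSum n (a * b) =
        ((moebius n : ℂ) * ramanujanSum n a) * ((moebius n : ℂ) * ramanujanSum n b) := by
  set G : ArithmeticFunction ℂ :=
    (ArithmeticFunction.pmul ((moebius : ArithmeticFunction ℤ) : ArithmeticFunction ℂ)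
      ((ArithmeticFunction.id : ArithmeticFunction ℕ) : ArithmeticFunction ℂ)) * ζ with hGdef
  have hGmult : G.IsMultiplicative :=
    ((isMultiplicative_moebius.intCast).pmul (isMultiplicative_id.natCast)).mul
      isMultiplicative_zeta.natCast
  have hGval : ∀ g : ℕ, G g = ∑ e ∈ g.divisors, (moebius e : ℂ) * e := by
    intro g
    rw [hGdef, coe_mul_zeta_apply]
    refine Finset.sum_congr rfl fun e _ => ?_
    simp [pmul_apply, intCoe_apply, natCoe_apply]
  have key : ∀ m : ℕ, (moebius n : ℂ) * ramanujanSum n m = G (Nat.gcd n m) := by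
    intro m
    rw [ramanujanSum_eq n m hn, hGval,
      moebius_mul_sum n (Nat.gcd n m) hn hsq (Nat.gcd_dvd_left n m)]
  constructor
  · rw [key 1, Nat.gcd_one_right, hGmult.1]
  · intro a b ha hb hab
    rw [key, key, key, Nat.Coprime.gcd_mul n hab]
    exact hGmult.map_mul_of_coprime
      (Nat.Coprime.coprime_dvd_left (Nat.gcd_dvd_right n a)
        (Nat.Coprime.coprime_dvd_right (Nat.gcd_dvd_right n b) hab))
end

section
/- Orthogonality of Ramanujan sums: if r₁ | r and r₂ | r, then (1/r)·Σ_{m=1}^{r} c_{r₁}(m)·c_{r₂}(m) equals φ(r₁) if r₁ = r₂ and 0 otherwise. -/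
open Finset

private lemma rs_cop_sub (n m : ℕ) (h : m ≤ n) :
    Nat.Coprime (n - m) n ↔ Nat.Coprime m n := by
  rw [Nat.Coprime, ← Nat.gcd_sub_self_right (Nat.sub_le n m), Nat.sub_sub_self h,
    Nat.gcd_sub_self_left h, Nat.gcd_comm]

private lemma rs_totient_card (n : ℕ) (hn : 0 < n) :
    ((Finset.Icc 1 n).filter (fun k => Nat.Coprime k n)).card = Nat.totient n := by
  rcases Nat.lt_or_ge n 2 with h | h
  · interval_cases n
    decide
  · rw [Nat.totient_eq_card_coprime]
    congr 1
    ext k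
    simp only [mem_filter, mem_Icc, mem_range]
    constructor
    · rintro ⟨⟨h1, h2⟩, hc⟩
      refine ⟨lt_of_le_of_ne h2 ?_, hc.symm⟩
      rintro rfl
      exact absurd hc.symm (by simp [Nat.Coprime]; omega)
    · rintro ⟨h1, hc⟩
      refine ⟨⟨?_, h1.le⟩, hc.symm⟩
      rcases Nat.eq_zero_or_pos k with rfl | hk
      · exact absurd hc (by simp [Nat.Coprime]; omega)
      · exact hk

private lemma rs_exp_frac_eq_one_iff (r a : ℕ) (hr : 0 < r) :
    Complex.exp (2 * Real.pi * Complex.I * a / r) = 1 ↔ r ∣ a := by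
  have hrC : (r : ℂ) ≠ 0 := Nat.cast_ne_zero.mpr hr.ne'
  have hpi : (2 * (Real.pi : ℂ) * Complex.I) ≠ 0 := by
    simp [Real.pi_ne_zero, Complex.I_ne_zero]
  rw [Complex.exp_eq_one_iff]
  constructor
  · rintro ⟨n, hn⟩
    have h2 : 2 * (Real.pi : ℂ) * Complex.I * a
        = 2 * (Real.pi : ℂ) * Complex.I * (n * r) := by
      field_simp at hn
      linear_combination (2 * (Real.pi : ℂ) * Complex.I) * hn
    have h3 : (a : ℂ) = n * r := mul_left_cancel₀ hpi h2
    have ha : (a : ℤ) = n * r := by exact_mod_cast h3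
    have : (r : ℤ) ∣ (a : ℤ) := ⟨n, by rw [ha]; ring⟩
    exact_mod_cast this
  · rintro ⟨b, rfl⟩
    exact ⟨b, by push_cast; field_simp <;> ring⟩

private lemma rs_geo_sum (r a : ℕ) (hr : 0 < r) :
    ∑ m ∈ Icc 1 r, Complex.exp (2 * Real.pi * Complex.I * m * a / r)
      = if r ∣ a then (r : ℂ) else 0 := by
  have hrC : (r : ℂ) ≠ 0 := Nat.cast_ne_zero.mpr hr.ne'
  have hterm : ∀ m : ℕ, Complex.exp (2 * Real.pi * Complex.I * m * a / r)
      = Complex.exp (2 * Real.pi * Complex.I * a / r) ^ m := by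
    intro m
    rw [← Complex.exp_nat_mul]
    ring_nf
  simp only [hterm]
  set z := Complex.exp (2 * Real.pi * Complex.I * a / r) with hz
  have hzr : z ^ r = 1 := by
    rw [hz, ← Complex.exp_nat_mul]
    have : (r : ℂ) * (2 * Real.pi * Complex.I * a / r)
        = (a : ℤ) * (2 * Real.pi * Complex.I) := by
      push_cast
      field_simp
    rw [this, Complex.exp_int_mul_two_pi_mul_I]
  by_cases hd : r ∣ a
  · rw [if_pos hd]
    have hz1 : z = 1 := (rs_exp_frac_eq_one_iff r a hr).mpr hd
    simp [hz1, Nat.card_Icc]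
  · rw [if_neg hd]
    have hz1 : z ≠ 1 := fun h => hd ((rs_exp_frac_eq_one_iff r a hr).mp h)
    have hIcc : ∑ m ∈ Icc 1 r, z ^ m = z * ∑ m ∈ range r, z ^ m := by
      rw [mul_sum, ← Finset.Ico_add_one_right_eq_Icc, Finset.sum_Ico_eq_sum_range]
      exact Finset.sum_congr rfl fun i _ => by rw [pow_add, pow_one]
    rw [hIcc, geom_sum_eq hz1, hzr]
    simp

private lemma rs_dvd_iff (r r₁ r₂ d₁ d₂ k₁ k₂ : ℕ) (hr : 0 < r)
    (hd₁ : r₁ * d₁ = r) (hd₂ : r₂ * d₂ = r)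
    (hk₁l : 1 ≤ k₁) (hk₁u : k₁ ≤ r₁) (hc₁ : Nat.Coprime k₁ r₁)
    (hk₂l : 1 ≤ k₂) (hk₂u : k₂ ≤ r₂) (hc₂ : Nat.Coprime k₂ r₂) :
    r ∣ k₁ * d₁ + k₂ * d₂ ↔ (r₁ = r₂ ∧ r₁ ∣ k₁ + k₂) := by
  have hd₁pos : 0 < d₁ := by
    rcases Nat.eq_zero_or_pos d₁ with rfl | h
    · omega
    · exact h
  have hd₂pos : 0 < d₂ := by
    rcases Nat.eq_zero_or_pos d₂ with rfl | h
    · omega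
    · exact h
  have hb₁ : k₁ * d₁ ≤ r := by
    calc k₁ * d₁ ≤ r₁ * d₁ := Nat.mul_le_mul_right _ hk₁u
      _ = r := hd₁
  have hb₂ : k₂ * d₂ ≤ r := by
    calc k₂ * d₂ ≤ r₂ * d₂ := Nat.mul_le_mul_right _ hk₂u
      _ = r := hd₂
  have hp₁ : 0 < k₁ * d₁ := Nat.mul_pos hk₁l hd₁pos
  have hp₂ : 0 < k₂ * d₂ := Nat.mul_pos hk₂l hd₂pos
  constructor
  · rintro ⟨c, hc⟩
    have hcb : c < 3 := by
      have : r * c < r * 3 := by omega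
      exact Nat.lt_of_mul_lt_mul_left this
    interval_cases c
    · omega
    · have hk₁lt : k₁ < r₁ := by
        rcases Nat.lt_or_ge k₁ r₁ with h | h
        · exact h
        · exfalso
          have : k₁ = r₁ := le_antisymm hk₁u h
          subst this
          omega
      have heq : k₂ * d₂ = (r₁ - k₁) * d₁ := by
        have : (r₁ - k₁) * d₁ = r₁ * d₁ - k₁ * d₁ := by rw [Nat.sub_mul]
        omega
      have key : k₂ * r₁ * r = (r₁ - k₁) * r₂ * r := by
        calc k₂ * r₁ * r = k₂ * r₁ * (r₂ * d₂) := by rw [hd₂]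
          _ = (k₂ * d₂) * (r₁ * r₂) := by ring
          _ = ((r₁ - k₁) * d₁) * (r₁ * r₂) := by rw [heq]
          _ = (r₁ - k₁) * r₂ * (r₁ * d₁) := by ring
          _ = (r₁ - k₁) * r₂ * r := by rw [hd₁]
      have key2 : k₂ * r₁ = (r₁ - k₁) * r₂ := Nat.eq_of_mul_eq_mul_right hr key
      have hcs : Nat.Coprime r₁ (r₁ - k₁) := ((rs_cop_sub r₁ k₁ hk₁u).mpr hc₁).symm
      have h12 : r₁ ∣ r₂ := by
        refine hcs.dvd_of_dvd_mul_left ?_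
        exact ⟨k₂, by rw [← key2]; ring⟩
      have h21 : r₂ ∣ r₁ := by
        refine (hc₂.symm).dvd_of_dvd_mul_left (n := r₁) ?_
        exact ⟨r₁ - k₁, by rw [key2]; ring⟩
      have : r₁ = r₂ := Nat.dvd_antisymm h12 h21
      subst this
      have : k₂ = r₁ - k₁ :=
        Nat.eq_of_mul_eq_mul_right (show 0 < r₁ by omega) key2
      exact ⟨rfl, ⟨1, by omega⟩⟩
    · have e₁ : k₁ * d₁ = r := by omega
      have e₂ : k₂ * d₂ = r := by omega
      have hk₁e : k₁ = r₁ := by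
        have : k₁ * d₁ = r₁ * d₁ := by omega
        exact Nat.eq_of_mul_eq_mul_right hd₁pos this
      have hk₂e : k₂ = r₂ := by
        have : k₂ * d₂ = r₂ * d₂ := by omega
        exact Nat.eq_of_mul_eq_mul_right hd₂pos this
      subst hk₁e
      subst hk₂e
      have h1 : k₁ = 1 := by simpa [Nat.Coprime] using hc₁
      have h2 : k₂ = 1 := by simpa [Nat.Coprime] using hc₂
      subst h1
      subst h2
      exact ⟨rfl, one_dvd _⟩
  · rintro ⟨rfl, b, hb⟩
    have hr₁ : 0 < r₁ := by omega
    have hdd : d₂ = d₁ := Nat.eq_of_mul_eq_mul_left hr₁ (by omega)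
    subst hdd
    exact ⟨b, by rw [← hd₁, ← add_mul, hb]; ring⟩

private lemma rs_filter_singleton (r₁ k₁ : ℕ) (hk₁l : 1 ≤ k₁) (hk₁u : k₁ ≤ r₁)
    (hc₁ : Nat.Coprime k₁ r₁) :
    (((Finset.Icc 1 r₁).filter (fun k => Nat.Coprime k r₁)).filter
        (fun k₂ => r₁ ∣ k₁ + k₂))
      = {if k₁ = r₁ then r₁ else r₁ - k₁} := by
  rw [Finset.eq_singleton_iff_unique_mem]
  constructor
  · by_cases he : k₁ = r₁
    · subst he
      have h1 : k₁ = 1 := by simpa [Nat.Coprime] using hc₁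
      subst h1
      simp
    · have hlt : k₁ < r₁ := lt_of_le_of_ne hk₁u he
      rw [if_neg he]
      simp only [mem_filter, mem_Icc]
      exact ⟨⟨⟨by omega, by omega⟩, (rs_cop_sub r₁ k₁ hk₁u).mpr hc₁⟩, ⟨1, by omega⟩⟩
  · intro k₂ hk₂
    simp only [mem_filter, mem_Icc] at hk₂
    obtain ⟨⟨⟨hk₂l, hk₂u⟩, hc₂⟩, c, hcd⟩ := hk₂
    by_cases he : k₁ = r₁
    · subst he
      have h1 : k₁ = 1 := by simpa [Nat.Coprime] using hc₁
      rw [if_pos rfl]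
      omega
    · have hlt : k₁ < r₁ := lt_of_le_of_ne hk₁u he
      rw [if_neg he]
      have hcc : c < 2 := by
        refine Nat.lt_of_mul_lt_mul_left (a := r₁) ?_
        omega
      interval_cases c <;> omega

theorem ramanujanSum_orthogonality (r r₁ r₂ : ℕ) (hr : 0 < r)
    (h₁ : r₁ ∣ r) (h₂ : r₂ ∣ r) :
    (1 / (r : ℂ)) * ∑ m ∈ Finset.Icc 1 r, ramanujanSum r₁ m * ramanujanSum r₂ m =
      if r₁ = r₂ then (Nat.totient r₁ : ℂ) else 0 := by
  have hr₁ : 0 < r₁ := Nat.pos_of_dvd_of_pos h₁ hr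
  have hr₂ : 0 < r₂ := Nat.pos_of_dvd_of_pos h₂ hr
  obtain ⟨d₁, hd₁⟩ := h₁
  obtain ⟨d₂, hd₂⟩ := h₂
  have hd₁' : r₁ * d₁ = r := hd₁.symm
  have hd₂' : r₂ * d₂ = r := hd₂.symm
  have hrC : (r : ℂ) ≠ 0 := Nat.cast_ne_zero.mpr hr.ne'
  have hr₁C : (r₁ : ℂ) ≠ 0 := Nat.cast_ne_zero.mpr hr₁.ne'
  have hr₂C : (r₂ : ℂ) ≠ 0 := Nat.cast_ne_zero.mpr hr₂.ne'
  have hd₁C : (r₁ : ℂ) * d₁ = r := by exact_mod_cast congrArg (Nat.cast : ℕ → ℂ) hd₁'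
  have hd₂C : (r₂ : ℂ) * d₂ = r := by exact_mod_cast congrArg (Nat.cast : ℕ → ℂ) hd₂'
  set S₁ := (Finset.Icc 1 r₁).filter (fun k => Nat.Coprime k r₁) with hS₁
  set S₂ := (Finset.Icc 1 r₂).filter (fun k => Nat.Coprime k r₂) with hS₂
  have hcomb : ∀ m k₁ k₂ : ℕ,
      Complex.exp (2 * Real.pi * Complex.I * m * k₁ / r₁)
        * Complex.exp (2 * Real.pi * Complex.I * m * k₂ / r₂)
      = Complex.exp (2 * Real.pi * Complex.I * m * ((k₁ * d₁ + k₂ * d₂ : ℕ) : ℂ) / r) := by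
    intro m k₁ k₂
    rw [← Complex.exp_add]
    congr 1
    push_cast
    field_simp
    linear_combination (-((m : ℂ) * k₁ * r₂)) * hd₁C
      + (-((m : ℂ) * k₂ * r₁)) * hd₂C
  have key : ∑ m ∈ Finset.Icc 1 r, ramanujanSum r₁ m * ramanujanSum r₂ m
      = ∑ k₁ ∈ S₁, ∑ k₂ ∈ S₂,
          (if r ∣ k₁ * d₁ + k₂ * d₂ then (r : ℂ) else 0) := by
    unfold ramanujanSum
    calc ∑ m ∈ Finset.Icc 1 r,
          (∑ k₁ ∈ S₁, Complex.exp (2 * Real.pi * Complex.I * m * k₁ / r₁))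
            * (∑ k₂ ∈ S₂, Complex.exp (2 * Real.pi * Complex.I * m * k₂ / r₂))
        = ∑ m ∈ Finset.Icc 1 r, ∑ k₁ ∈ S₁, ∑ k₂ ∈ S₂,
            Complex.exp (2 * Real.pi * Complex.I * m * ((k₁ * d₁ + k₂ * d₂ : ℕ) : ℂ) / r) := by
          refine Finset.sum_congr rfl fun m _ => ?_
          rw [Finset.sum_mul_sum]
          exact Finset.sum_congr rfl fun k₁ _ => Finset.sum_congr rfl fun k₂ _ => hcomb m k₁ k₂
      _ = ∑ k₁ ∈ S₁, ∑ k₂ ∈ S₂, ∑ m ∈ Finset.Icc 1 r,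
            Complex.exp (2 * Real.pi * Complex.I * m * ((k₁ * d₁ + k₂ * d₂ : ℕ) : ℂ) / r) := by
          rw [Finset.sum_comm]
          exact Finset.sum_congr rfl fun k₁ _ => Finset.sum_comm
      _ = ∑ k₁ ∈ S₁, ∑ k₂ ∈ S₂, (if r ∣ k₁ * d₁ + k₂ * d₂ then (r : ℂ) else 0) :=
          Finset.sum_congr rfl fun k₁ _ => Finset.sum_congr rfl fun k₂ _ =>
            rs_geo_sum r (k₁ * d₁ + k₂ * d₂) hr
  rw [key]
  by_cases hrr : r₁ = r₂
  · subst hrr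
    rw [if_pos rfl]
    have hmain : ∑ k₁ ∈ S₁, ∑ k₂ ∈ S₁,
        (if r ∣ k₁ * d₁ + k₂ * d₂ then (r : ℂ) else 0) = ∑ _k₁ ∈ S₁, (r : ℂ) := by
      refine Finset.sum_congr rfl fun k₁ hk₁ => ?_
      simp only [hS₁, mem_filter, mem_Icc] at hk₁
      obtain ⟨⟨hk₁l, hk₁u⟩, hc₁⟩ := hk₁
      have hstep : ∑ k₂ ∈ S₁, (if r ∣ k₁ * d₁ + k₂ * d₂ then (r : ℂ) else 0)
          = ∑ k₂ ∈ S₁, (if r₁ ∣ k₁ + k₂ then (r : ℂ) else 0) := by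
        refine Finset.sum_congr rfl fun k₂ hk₂ => ?_
        simp only [hS₁, mem_filter, mem_Icc] at hk₂
        obtain ⟨⟨hk₂l, hk₂u⟩, hc₂⟩ := hk₂
        exact if_congr ((rs_dvd_iff r r₁ r₁ d₁ d₂ k₁ k₂ hr hd₁' hd₂' hk₁l hk₁u hc₁
          hk₂l hk₂u hc₂).trans (by simp)) rfl rfl
      rw [hstep, ← Finset.sum_filter]
      simp only [hS₁]
      rw [rs_filter_singleton r₁ k₁ hk₁l hk₁u hc₁, Finset.sum_singleton]
    rw [hmain, Finset.sum_const, nsmul_eq_mul]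
    have hcard : S₁.card = Nat.totient r₁ := rs_totient_card r₁ hr₁
    rw [hcard]
    field_simp
  · rw [if_neg hrr]
    have hzero : ∑ k₁ ∈ S₁, ∑ k₂ ∈ S₂,
        (if r ∣ k₁ * d₁ + k₂ * d₂ then (r : ℂ) else 0) = 0 := by
      refine Finset.sum_eq_zero fun k₁ hk₁ => Finset.sum_eq_zero fun k₂ hk₂ => ?_
      simp only [hS₁, mem_filter, mem_Icc] at hk₁
      simp only [hS₂, mem_filter, mem_Icc] at hk₂
      obtain ⟨⟨hk₁l, hk₁u⟩, hc₁⟩ := hk₁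
      obtain ⟨⟨hk₂l, hk₂u⟩, hc₂⟩ := hk₂
      exact if_neg (fun h => hrr ((rs_dvd_iff r r₁ r₂ d₁ d₂ k₁ k₂ hr hd₁' hd₂' hk₁l hk₁u hc₁
        hk₂l hk₂u hc₂).mp h).1)
    rw [hzero, mul_zero]
end

section
/- Every integer occurs as a coefficient of some cyclotomic polynomial: {a_n(k) : n, k ∈ ℕ} = ℤ. -/
open Polynomial ArithmeticFunction Finset ArithmeticFunction.Moebius ArithmeticFunction.Omega

theorem moebius_id {n : ℕ} (hn : 0 < n) (hsq : Squarefree n) :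
    cyclotomic n ℚ * ∏ d ∈ n.divisors.filter (fun d => ¬ μ (n/d) = 1), (X ^ d - 1) =
      ∏ d ∈ n.divisors.filter (fun d => μ (n/d) = 1), (X ^ d - 1) := by
  have key := cyclotomic_eq_prod_X_pow_sub_one_pow_moebius (n := n) ℚ
  rw [Nat.prod_divisorsAntidiagonal' (f := fun a b => (algebraMap ℚ[X] (RatFunc ℚ)) (X ^ b - 1) ^ μ a)] at key
  have hne : ∀ d ∈ n.divisors, (algebraMap ℚ[X] (RatFunc ℚ)) (X ^ d - 1) ≠ 0 := by
    intro d hd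
    simp only [ne_eq, map_eq_zero_iff _ (IsFractionRing.injective ℚ[X] (RatFunc ℚ))]
    intro h
    have h3 : (X ^ d - 1 : ℚ[X]).coeff d = 0 := by rw [h]; simp
    have hd1 : 1 ≤ d := Nat.one_le_iff_ne_zero.2 (Nat.pos_of_mem_divisors hd).ne'
    rw [coeff_sub, coeff_X_pow, coeff_one, if_pos rfl, if_neg (by omega)] at h3
    simp at h3
  have hmu : ∀ d ∈ n.divisors, ¬ μ (n/d) = 1 → μ (n/d) = -1 := by
    intro d hd h
    have hdvd : d ∣ n := (Nat.mem_divisors.1 hd).1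
    have hsq' : Squarefree (n / d) := hsq.squarefree_of_dvd (Nat.div_dvd_of_dvd hdvd)
    have h2 := moebius_apply_of_squarefree hsq'
    rcases Nat.even_or_odd (cardFactors (n/d)) with h1 | h1
    · rw [h1.neg_one_pow] at h2; omega
    · rw [h1.neg_one_pow] at h2; exact h2
  apply IsFractionRing.injective ℚ[X] (RatFunc ℚ)
  rw [map_mul, map_prod, key, ← prod_filter_mul_prod_filter_not n.divisors (fun d => μ (n/d) = 1),
    map_prod, mul_comm, ← mul_assoc, mul_comm (∏ x ∈ filter (fun d => ¬ μ (n/d) = 1) n.divisors,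
    (algebraMap ℚ[X] (RatFunc ℚ)) (X ^ x - 1)), mul_assoc]
  have e1 : ∏ x ∈ filter (fun x => μ (n / x) = 1) n.divisors,
      (algebraMap ℚ[X] (RatFunc ℚ)) (X ^ x - 1) ^ μ (n / x)
      = ∏ x ∈ filter (fun x => μ (n / x) = 1) n.divisors,
      (algebraMap ℚ[X] (RatFunc ℚ)) (X ^ x - 1) :=
    prod_congr rfl fun d hd => by rw [(mem_filter.1 hd).2, zpow_one]
  have e2 : (∏ x ∈ filter (fun d => ¬ μ (n/d) = 1) n.divisors,
      (algebraMap ℚ[X] (RatFunc ℚ)) (X ^ x - 1)) *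
      ∏ x ∈ filter (fun x => ¬ μ (n / x) = 1) n.divisors,
      (algebraMap ℚ[X] (RatFunc ℚ)) (X ^ x - 1) ^ μ (n / x) = 1 := by
    rw [← prod_mul_distrib]
    refine prod_eq_one fun d hd => ?_
    rw [hmu d (mem_filter.1 hd).1 (mem_filter.1 hd).2, zpow_neg_one]
    exact mul_inv_cancel₀ (hne d (mem_filter.1 hd).1)
  rw [e1, e2, mul_one]
open Polynomial Finset

theorem trunc_prod (N : ℕ) (S : Finset ℕ) (hS : ∀ a ∈ S, ∀ b ∈ S, a ≠ b → N ≤ a + b) :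
    (X : ℚ[X]) ^ N ∣ (∏ s ∈ S, (X ^ s - 1)) - (-1) ^ S.card * (1 - ∑ s ∈ S, X ^ s) := by
  induction S using Finset.induction_on with
  | empty => simp
  | @insert a S ha IH =>
    have IH' := IH (fun x hx y hy hxy => hS x (mem_insert_of_mem hx) y (mem_insert_of_mem hy) hxy)
    have key : (∏ s ∈ insert a S, (X ^ s - 1)) -
        (-1 : ℚ[X]) ^ (insert a S).card * (1 - ∑ s ∈ insert a S, X ^ s)
        = (X ^ a - 1) * ((∏ s ∈ S, (X ^ s - 1)) - (-1) ^ S.card * (1 - ∑ s ∈ S, X ^ s))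
          + (-1) ^ S.card * (-(∑ s ∈ S, X ^ (a + s))) := by
      rw [prod_insert ha, sum_insert ha, card_insert_of_notMem ha]
      simp_rw [pow_add, ← mul_sum]
      ring
    rw [key]
    refine dvd_add (Dvd.dvd.mul_left IH' _) (Dvd.dvd.mul_left (dvd_neg.2 (dvd_sum fun s hs => ?_)) _)
    exact pow_dvd_pow X (hS a (mem_insert_self a S) s (mem_insert_of_mem hs)
      (fun h => ha (h ▸ hs)))
open Polynomial ArithmeticFunction Finset

theorem sqf_prod (F : Finset ℕ) (hP : ∀ p ∈ F, p.Prime) : Squarefree (∏ p ∈ F, p) := by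
  induction F using Finset.induction_on with
  | empty => simpa using squarefree_one
  | @insert a S ha IH =>
    rw [prod_insert ha, Nat.squarefree_mul_iff]
    have hpa := hP a (mem_insert_self a S)
    refine ⟨(hpa.coprime_iff_not_dvd).2 fun hdvd => ?_, hpa.squarefree,
      IH fun p hp => hP p (mem_insert_of_mem hp)⟩
    obtain ⟨q, hq, hdq⟩ := hpa.prime.exists_mem_finset_dvd hdvd
    exact ha (((Nat.prime_dvd_prime_iff_eq hpa (hP q (mem_insert_of_mem hq))).1 hdq) ▸ hq)

theorem omega_prod (F : Finset ℕ) (hP : ∀ p ∈ F, p.Prime) : Ω (∏ p ∈ F, p) = F.card := by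
  induction F using Finset.induction_on with
  | empty => simp
  | @insert a S ha IH =>
    rw [prod_insert ha, cardFactors_mul (hP a (mem_insert_self a S)).ne_zero
      (Finset.prod_ne_zero_iff.2 fun p hp => (hP p (mem_insert_of_mem hp)).ne_zero),
      cardFactors_apply_prime (hP a (mem_insert_self a S)),
      IH fun p hp => hP p (mem_insert_of_mem hp), card_insert_of_notMem ha]
    omega

theorem coeff_eq_of_dvd {f g : ℚ[X]} {N k : ℕ} (h : (X : ℚ[X]) ^ N ∣ f - g) (hk : k < N) :
    f.coeff k = g.coeff k := by
  obtain ⟨h', hh⟩ := h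
  have : f.coeff k - g.coeff k = 0 := by
    rw [← coeff_sub, hh, mul_comm, coeff_mul_X_pow', if_neg (by omega)]
  linarith
open Polynomial ArithmeticFunction Finset

theorem key_coeff (F : Finset ℕ) (hP : ∀ p ∈ F, p.Prime) (m : ℕ) (hm3 : 3 ≤ m)
    (hmle : ∀ p ∈ F, m ≤ p) (hodd : Odd F.card) (M : ℕ) (hM1 : 1 ≤ M) (hM : M < 2 * m) :
    (cyclotomic (∏ p ∈ F, p) ℚ).coeff M = 1 - (F.filter (· ≤ M)).card := by
  have hne : F.Nonempty := Finset.card_pos.1 hodd.pos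
  set n := ∏ p ∈ F, p with hn_def
  have hP' : ∀ p ∈ F, (p : ℕ) ≠ 0 := fun p hp => (hP p hp).ne_zero
  have hn0 : n ≠ 0 := Finset.prod_ne_zero_iff.2 fun p hp => hP' p hp
  have hsq : Squarefree n := sqf_prod F hP
  have hΩ : Ω n = F.card := omega_prod F hP
  have hn1 : 1 < n := by
    obtain ⟨p, hp⟩ := hne
    have : p ∣ n := dvd_prod_of_mem _ hp
    have := Nat.le_of_dvd (Nat.pos_of_ne_zero hn0) this
    have := hmle p hp
    omega
  have hprimedvd : ∀ q : ℕ, q.Prime → q ∣ n → q ∈ F := by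
    intro q hq hdvd
    obtain ⟨p, hp, hqp⟩ := hq.prime.exists_mem_finset_dvd hdvd
    exact ((Nat.prime_dvd_prime_iff_eq hq (hP p hp)).1 hqp) ▸ hp
  have hdvd_ge : ∀ d, d ∣ n → d ≠ 1 → ¬ d.Prime → m * m ≤ d := by
    intro d hd hd1 hdp
    have hd0 : d ≠ 0 := fun h => hn0 (Nat.eq_zero_of_zero_dvd (h ▸ hd))
    obtain ⟨q, hq, hqd⟩ := Nat.exists_prime_and_dvd hd1
    obtain ⟨e, he⟩ := hqd
    have hqd' : q ∣ d := ⟨e, he⟩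
    have hed : e ∣ d := ⟨q, by rw [he, mul_comm]⟩
    have he1 : e ≠ 1 := by rintro rfl; rw [mul_one] at he; exact hdp (he ▸ hq)
    have he0 : e ≠ 0 := fun h => hd0 (by rw [he, h, mul_zero])
    obtain ⟨q', hq', hq'e⟩ := Nat.exists_prime_and_dvd he1
    have hqq' : q ≠ q' := by
      intro h
      subst h
      have : q * q ∣ d := he ▸ mul_dvd_mul_left q hq'e
      exact hq.one_lt.ne' (Nat.isUnit_iff.1 ((hsq.squarefree_of_dvd hd) q this))
    have hqq'd : q * q' ∣ d := he ▸ mul_dvd_mul_left q hq'e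
    have h1 : m ≤ q := hmle q (hprimedvd q hq (hqd'.trans hd))
    have h2 : m ≤ q' := hmle q' (hprimedvd q' hq' ((hq'e.trans hed).trans hd))
    calc m * m ≤ q * q' := Nat.mul_le_mul h1 h2
    _ ≤ d := Nat.le_of_dvd (Nat.pos_of_ne_zero hd0) hqq'd
  have hmuodd : ∀ d, d ∣ n → (μ (n/d) = 1 ↔ Odd (Ω d)) := by
    intro d hd
    have hd0 : d ≠ 0 := fun h => hn0 (Nat.eq_zero_of_zero_dvd (h ▸ hd))
    have hnd0 : n / d ≠ 0 :=
      (Nat.div_pos (Nat.le_of_dvd (Nat.pos_of_ne_zero hn0) hd) (Nat.pos_of_ne_zero hd0)).ne'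
    have hsum : Ω (n / d) + Ω d = F.card := by
      rw [← cardFactors_mul hnd0 hd0, Nat.div_mul_cancel hd, hΩ]
    rw [moebius_apply_of_squarefree (hsq.squarefree_of_dvd (Nat.div_dvd_of_dvd hd))]
    rw [neg_one_pow_eq_one_iff_even (by norm_num)]
    obtain ⟨t, ht⟩ := hodd
    constructor
    · intro ⟨u, hu⟩; exact ⟨t - u, by omega⟩
    · intro ⟨u, hu⟩; exact ⟨t - u, by omega⟩
  set A := n.divisors.filter (fun d => μ (n/d) = 1) with hA_def
  set B := n.divisors.filter (fun d => ¬ μ (n/d) = 1) with hB_def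
  have hmemA : ∀ d, d ∈ A ↔ d ∣ n ∧ Odd (Ω d) := by
    intro d
    rw [hA_def, mem_filter, Nat.mem_divisors]
    constructor
    · rintro ⟨⟨h1, _⟩, h2⟩; exact ⟨h1, (hmuodd d h1).1 h2⟩
    · rintro ⟨h1, h2⟩; exact ⟨⟨h1, hn0⟩, (hmuodd d h1).2 h2⟩
  have hmemB : ∀ d, d ∈ B ↔ d ∣ n ∧ ¬ Odd (Ω d) := by
    intro d
    rw [hB_def, mem_filter, Nat.mem_divisors]
    constructor
    · rintro ⟨⟨h1, _⟩, h2⟩; exact ⟨h1, fun h => h2 ((hmuodd d h1).2 h)⟩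
    · rintro ⟨h1, h2⟩; exact ⟨⟨h1, hn0⟩, fun h => h2 ((hmuodd d h1).1 h)⟩
  have hB1 : (1 : ℕ) ∈ B := (hmemB 1).2 ⟨one_dvd n, by simp⟩
  have hBge : ∀ d ∈ B, d ≠ 1 → m * m ≤ d := by
    intro d hd hd1
    obtain ⟨h1, h2⟩ := (hmemB d).1 hd
    refine hdvd_ge d h1 hd1 fun hp => h2 (by rw [cardFactors_apply_prime hp]; exact odd_one)
  have hAlb : ∀ d ∈ A, d.Prime ∨ m * m ≤ d := by
    intro d hd
    obtain ⟨h1, h2⟩ := (hmemA d).1 hd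
    by_cases hp : d.Prime
    · exact Or.inl hp
    · refine Or.inr (hdvd_ge d h1 (fun h => ?_) hp)
      rw [h] at h2; simp at h2
  have hAm : ∀ d ∈ A, m ≤ d := by
    intro d hd
    rcases hAlb d hd with hp | hge
    · exact hmle d (hprimedvd d hp ((hmemA d).1 hd).1)
    · nlinarith
  have hFA : ∀ p ∈ F, p ∈ A := fun p hp => (hmemA p).2
    ⟨dvd_prod_of_mem _ hp, by rw [cardFactors_apply_prime (hP p hp)]; exact odd_one⟩
  -- truncations
  have dA := trunc_prod (M + 1) A (by
    intro a ha b hb hab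
    have := hAm a ha; have := hAm b hb
    omega)
  have dB := trunc_prod (M + 1) B (by
    intro a ha b hb hab
    rcases eq_or_ne a 1 with h1 | h1
    · have := hBge b hb (by omega)
      nlinarith
    · have := hBge a ha h1
      have : 1 ≤ b := Nat.pos_of_mem_divisors (mem_filter.1 hb).1
      nlinarith [hBge a ha h1])
  -- cardinalities
  have hmuB : ∀ d ∈ B, μ (n / d) = -1 := by
    intro d hd
    obtain ⟨hd', hne1⟩ := mem_filter.1 hd
    have hdn : d ∣ n := (Nat.mem_divisors.1 hd').1
    have h2 := moebius_apply_of_squarefree (hsq.squarefree_of_dvd (Nat.div_dvd_of_dvd hdn))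
    rcases Nat.even_or_odd (cardFactors (n/d)) with h1 | h1
    · rw [h1.neg_one_pow] at h2; exact absurd h2 hne1
    · rw [h1.neg_one_pow] at h2; exact h2
  have hcard : A.card = B.card := by
    have hsplit : ∑ d ∈ n.divisors, μ (n / d) = (A.card : ℤ) - B.card := by
      rw [← sum_filter_add_sum_filter_not n.divisors (fun d => μ (n/d) = 1)]
      rw [sum_congr rfl (fun d hd => (mem_filter.1 hd).2), sum_congr rfl hmuB]
      simp [sub_eq_add_neg]
      rfl
    have hz : ∑ d ∈ n.divisors, μ (n / d) = 0 := by
      rw [Nat.sum_div_divisors n (μ ·)]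
      have hmz := ArithmeticFunction.coe_mul_zeta_apply (f := (μ : ArithmeticFunction ℤ)) (x := n)
      rw [ArithmeticFunction.moebius_mul_coe_zeta] at hmz
      rw [← hmz, ArithmeticFunction.one_apply, if_neg (by omega)]
    omega
  -- main congruence
  have hid := moebius_id (Nat.pos_of_ne_zero hn0) hsq
  set Φ := cyclotomic n ℚ with hΦ
  have hmain : (X : ℚ[X]) ^ (M+1) ∣ Φ * (1 - ∑ d ∈ B, X ^ d) - (1 - ∑ d ∈ A, X ^ d) := by
    have h1 : (X : ℚ[X]) ^ (M+1) ∣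
        ((-1)^B.card : ℚ[X]) * (Φ * (1 - ∑ d ∈ B, X^d) - (1 - ∑ d ∈ A, X^d)) := by
      have e : ((-1)^B.card : ℚ[X]) * (Φ * (1 - ∑ d ∈ B, X^d) - (1 - ∑ d ∈ A, X^d))
          = ((∏ d ∈ A, (X^d - 1)) - (-1)^A.card * (1 - ∑ d ∈ A, X^d))
            - Φ * ((∏ d ∈ B, (X^d - 1)) - (-1)^B.card * (1 - ∑ d ∈ B, X^d))
            + (Φ * (∏ d ∈ B, (X^d-1)) - ∏ d ∈ A, (X^d-1)) := by
        rw [hcard]; ring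
      rw [e, hid, sub_self, add_zero]
      exact dvd_sub dA (Dvd.dvd.mul_left dB Φ)
    obtain ⟨h', hh⟩ := h1
    refine ⟨((-1)^B.card : ℚ[X]) * h', ?_⟩
    have h2 : ((-1 : ℚ[X])^B.card) * ((-1)^B.card) = 1 := by rw [← mul_pow]; norm_num
    calc Φ * (1 - ∑ d ∈ B, X ^ d) - (1 - ∑ d ∈ A, X ^ d)
        = ((-1)^B.card : ℚ[X]) * (((-1)^B.card : ℚ[X]) *
          (Φ * (1 - ∑ d ∈ B, X^d) - (1 - ∑ d ∈ A, X^d))) := by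
          rw [← mul_assoc, h2, one_mul]
      _ = X^(M+1) * (((-1)^B.card : ℚ[X]) * h') := by rw [hh]; ring
  have hkA : ∀ k, 1 ≤ k → k ≤ M → (k ∈ A ↔ k ∈ F) := by
    intro k hk1 hkM
    constructor
    · intro hk
      rcases hAlb k hk with hp | hge
      · exact hprimedvd k hp ((hmemA k).1 hk).1
      · nlinarith
    · exact hFA k
  have hstep : ∀ k, 1 ≤ k → k ≤ M →
      Φ.coeff k = Φ.coeff (k-1) - (if k ∈ F then 1 else 0) := by
    intro k hk1 hkM
    have hc := coeff_eq_of_dvd hmain (show k < M+1 by omega)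
    have hL : (Φ * (1 - ∑ d ∈ B, X ^ d)).coeff k = Φ.coeff k - Φ.coeff (k-1) := by
      rw [mul_sub, mul_one, coeff_sub, mul_sum, finset_sum_coeff]
      congr 1
      have hBk : B.filter (· ≤ k) = {1} := by
        ext d
        simp only [mem_filter, mem_singleton]
        constructor
        · rintro ⟨hdB, hdk⟩
          by_contra hd1
          have := hBge d hdB hd1
          nlinarith
        · rintro rfl; exact ⟨hB1, hk1⟩
      calc ∑ d ∈ B, (Φ * X ^ d).coeff k
          = ∑ d ∈ B, if d ≤ k then Φ.coeff (k - d) else 0 := by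
            exact sum_congr rfl fun d hd => coeff_mul_X_pow' Φ d k
        _ = ∑ d ∈ B.filter (· ≤ k), Φ.coeff (k - d) :=
              (sum_filter (fun d => d ≤ k) (fun d => Φ.coeff (k - d))).symm
        _ = Φ.coeff (k-1) := by rw [hBk, sum_singleton]
    have hR : ((1 : ℚ[X]) - ∑ d ∈ A, X ^ d).coeff k = -(if k ∈ F then 1 else 0) := by
      rw [coeff_sub, coeff_one, if_neg (by omega), finset_sum_coeff]
      simp_rw [coeff_X_pow]
      rw [Finset.sum_ite_eq A k (fun _ => (1:ℚ))]
      rw [if_congr (hkA k hk1 hkM) rfl rfl]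
      ring
    rw [hL, hR] at hc
    linarith
  have hfinal : ∀ j, j ≤ M → Φ.coeff j = 1 - ((F.filter (· ≤ j)).card : ℚ) := by
    intro j
    induction j with
    | zero =>
      intro _
      have hemp : F.filter (· ≤ 0) = ∅ := by
        refine filter_eq_empty_iff.2 fun p hp => ?_
        have := hmle p hp
        omega
      rw [cyclotomic_coeff_zero ℚ hn1, hemp]
      simp
    | succ j IH =>
      intro hj
      have hdisj : Disjoint (F.filter (· ≤ j)) (F.filter (· = j+1)) := by
        rw [disjoint_left]
        intro d hd hd'
        have h1 := (mem_filter.1 hd).2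
        have h2 := (mem_filter.1 hd').2
        omega
      have hun : F.filter (· ≤ j+1) = F.filter (· ≤ j) ∪ F.filter (· = j+1) := by
        ext d
        simp only [mem_filter, mem_union, decide_eq_true_eq]
        constructor
        · rintro ⟨hd, hle⟩
          rcases Nat.lt_or_ge d (j+1) with h | h
          · exact Or.inl ⟨hd, by omega⟩
          · exact Or.inr ⟨hd, by omega⟩
        · rintro (⟨hd, h⟩ | ⟨hd, h⟩) <;> exact ⟨hd, by omega⟩
      have hcards : ((F.filter (· ≤ j+1)).card : ℚ)
          = ((F.filter (· ≤ j)).card : ℚ) + (if j+1 ∈ F then 1 else 0) := by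
        rw [hun, card_union_of_disjoint hdisj, filter_eq']
        split <;> simp
      rw [hstep (j+1) (by omega) hj]
      simp only [Nat.add_sub_cancel]
      rw [IH (by omega), hcards]
      ring
  rw [hfinal M le_rfl]
open Polynomial

theorem coeff_comp_neg_X (p : ℚ[X]) (k : ℕ) :
    (p.comp (-X)).coeff k = (-1) ^ k * p.coeff k := by
  rw [comp, eval₂_eq_sum, Polynomial.sum, finset_sum_coeff]
  have h : ∀ e ∈ p.support, (C (p.coeff e) * (-X) ^ e).coeff k
      = if e = k then (-1) ^ k * p.coeff e else 0 := by
    intro e _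
    have he : C (p.coeff e) * (-X) ^ e = C ((-1) ^ e * p.coeff e) * X ^ e := by
      rw [map_mul, map_pow, map_neg, map_one]; ring
    rw [he, coeff_C_mul, coeff_X_pow]
    by_cases hek : k = e
    · subst hek; simp
    · rw [if_neg hek, if_neg (fun h => hek h.symm), mul_zero]
  rw [Finset.sum_congr rfl h, Finset.sum_ite_eq' p.support k (fun e => (-1) ^ k * p.coeff e)]
  split_ifs with h1
  · rfl
  · rw [notMem_support_iff.1 h1, mul_zero]

theorem cyclo_two_mul (n : ℕ) (hodd : Odd n) (h1 : 1 < n) :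
    cyclotomic (2 * n) ℚ = (cyclotomic n ℚ).comp (-X) := by
  have hn0 : (2 * n) ≠ 0 := by omega
  obtain ⟨z9, hz9⟩ : ∃ z9 : ℂ, IsPrimitiveRoot z9 (2 * n) :=
    ⟨_, Complex.isPrimitiveRoot_exp _ hn0⟩
  have hneg : IsPrimitiveRoot (-z9) n := by
    constructor
    · have h2 : (-z9) ^ n = - z9 ^ n := hodd.neg_pow z9
      have hz2 : z9 ^ n * z9 ^ n = 1 := by
        rw [← pow_add]
        have : n + n = 2 * n := by omega
        rw [this]; exact hz9.pow_eq_one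
      have hzn : z9 ^ n ≠ 1 := by
        intro h
        have hd := hz9.dvd_of_pow_eq_one n h
        have := Nat.le_of_dvd (by omega) hd
        omega
      rcases mul_self_eq_one_iff.1 hz2 with h | h
      · exact absurd h hzn
      · rw [h2, h, neg_neg]
    · intro l hl
      have hsq : ((-z9) ^ l) ^ 2 = z9 ^ (2 * l) := by
        rw [← pow_mul, mul_comm l 2, pow_mul, neg_sq, ← pow_mul]
      have h2 : z9 ^ (2 * l) = 1 := by rw [← hsq, hl, one_pow]
      obtain ⟨c, hc⟩ := hz9.dvd_of_pow_eq_one _ h2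
      refine ⟨c, ?_⟩
      have h3 : 2 * l = 2 * (n * c) := by rw [hc]; ring
      omega
  have hint : IsIntegral ℚ z9 :=
    ⟨X ^ (2 * n) - C 1, monic_X_pow_sub_C 1 hn0, by simp [hz9.pow_eq_one]⟩
  have e2 : cyclotomic (2 * n) ℚ = minpoly ℚ z9 := cyclotomic_eq_minpoly_rat hz9 (by omega)
  have e1 : cyclotomic n ℚ = minpoly ℚ (-z9) := cyclotomic_eq_minpoly_rat hneg (by omega)
  have hdegX : (-X : ℚ[X]).natDegree = 1 := by rw [natDegree_neg, natDegree_X]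
  have hmonic : ((cyclotomic n ℚ).comp (-X)).Monic := by
    have h3 : 2 < n := by obtain ⟨k, hk⟩ := hodd; omega
    have hev : Even (n.totient) := Nat.totient_even h3
    rw [Monic, leadingCoeff_comp (by rw [hdegX]; norm_num),
      (cyclotomic.monic n ℚ).leadingCoeff, one_mul, leadingCoeff_neg, leadingCoeff_X,
      natDegree_cyclotomic, hev.neg_one_pow]
  have hroot : aeval z9 ((cyclotomic n ℚ).comp (-X)) = 0 := by
    rw [aeval_comp]
    simp only [map_neg, aeval_X]
    rw [e1, minpoly.aeval]
  have hdvd : cyclotomic (2 * n) ℚ ∣ (cyclotomic n ℚ).comp (-X) := by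
    rw [e2]; exact minpoly.dvd ℚ z9 hroot
  have hdeg : ((cyclotomic n ℚ).comp (-X)).natDegree ≤ (cyclotomic (2*n) ℚ).natDegree := by
    rw [natDegree_comp, natDegree_cyclotomic, natDegree_cyclotomic, hdegX, mul_one,
      Nat.totient_mul ((Nat.prime_two.coprime_iff_not_dvd).2
        (Nat.two_dvd_ne_zero.2 (Nat.odd_iff.1 hodd))),
      Nat.totient_two, one_mul]
  exact (Polynomial.eq_of_monic_of_dvd_of_natDegree_le (cyclotomic.monic (2*n) ℚ) hmonic
    hdvd hdeg).symm
open Finset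

theorem primes_in_doubling (t : ℕ) :
    ∃ x : ℕ, 3 ≤ x ∧ t ≤ ((Finset.Ioc x (2*x)).filter Nat.Prime).card := by
  by_contra hcon
  push_neg at hcon
  set f : ℕ → ℝ := Set.indicator {p | Nat.Prime p} (fun n => 1/(n:ℝ)) with hf
  have hf0 : ∀ n, 0 ≤ f n := by
    intro n
    apply Set.indicator_nonneg
    intro i _
    positivity
  have hblock : ∀ x : ℕ, 3 ≤ x → ∑ i ∈ Finset.Ioc x (2*x), f i ≤ (t : ℝ) / x := by
    intro x hx
    rw [hf, Finset.sum_indicator_eq_sum_filter]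
    have hcard := hcon x hx
    have hterm : ∀ i ∈ (Finset.Ioc x (2*x)).filter (fun i => i ∈ {p | Nat.Prime p}),
        1/(i:ℝ) ≤ 1/(x:ℝ) := by
      intro i hi
      have : x < i := (Finset.mem_Ioc.1 (Finset.mem_filter.1 hi).1).1
      apply one_div_le_one_div_of_le
      · positivity
      · exact_mod_cast this.le
    calc ∑ i ∈ (Finset.Ioc x (2*x)).filter (fun i => i ∈ {p | Nat.Prime p}), 1/(i:ℝ)
        ≤ ∑ _i ∈ (Finset.Ioc x (2*x)).filter (fun i => i ∈ {p | Nat.Prime p}), 1/(x:ℝ) :=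
          Finset.sum_le_sum hterm
      _ = ((Finset.Ioc x (2*x)).filter (fun i => i ∈ {p | Nat.Prime p})).card * (1/(x:ℝ)) := by
          rw [Finset.sum_const, nsmul_eq_mul]
      _ ≤ (t:ℝ) * (1/(x:ℝ)) := by
          have : ((Finset.Ioc x (2*x)).filter (fun i => i ∈ {p | Nat.Prime p})).card ≤ t := by
            have : (Finset.Ioc x (2*x)).filter (fun i => i ∈ {p | Nat.Prime p})
                = (Finset.Ioc x (2*x)).filter Nat.Prime := by
              apply Finset.filter_congr; intro i _; simp
            rw [this]; exact (hcon x hx).le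
          apply mul_le_mul_of_nonneg_right _ (by positivity)
          exact_mod_cast this
      _ = (t:ℝ)/x := by ring
  have hS : ∀ K : ℕ, ∑ i ∈ Finset.range (3 * 2^K + 1), f i ≤ 1 + t - t/(2^K : ℝ) := by
    intro K
    induction K with
    | zero =>
      have : Finset.range (3 * 2^0 + 1) = {0, 1, 2, 3} := by decide
      rw [this]
      have e0 : f 0 = 0 := by simp [hf, Set.indicator, Nat.not_prime_zero]
      have e1 : f 1 = 0 := by simp [hf, Set.indicator, Nat.not_prime_one]
      have e2 : f 2 = 1/2 := by simp [hf, Set.indicator, Nat.prime_two]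
      have e3 : f 3 = 1/3 := by simp [hf, Set.indicator, Nat.prime_three]
      rw [Finset.sum_insert (by decide), Finset.sum_insert (by decide),
        Finset.sum_insert (by decide), Finset.sum_singleton, e0, e1, e2, e3]
      norm_num
    | succ K IH =>
      have hsplit : ∑ i ∈ Finset.range (3 * 2^(K+1) + 1), f i
          = ∑ i ∈ Finset.range (3 * 2^K + 1), f i
            + ∑ i ∈ Finset.Ioc (3*2^K) (2*(3*2^K)), f i := by
        rw [Finset.range_eq_Ico,
          ← Finset.sum_Ico_consecutive _ (Nat.zero_le _)
            (show 3*2^K + 1 ≤ 3*2^(K+1)+1 by have := Nat.pow_le_pow_right (by norm_num : 1 ≤ 2) (Nat.le_succ K); omega)]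
        congr 1
        · rw [Finset.range_eq_Ico]
        have : Finset.Ico (3*2^K+1) (3*2^(K+1)+1) = Finset.Ioc (3*2^K) (2*(3*2^K)) := by
          ext i
          simp only [Finset.mem_Ico, Finset.mem_Ioc]
          have : 3 * 2^(K+1) = 2*(3*2^K) := by ring
          omega
        rw [this]
      rw [hsplit]
      have hb := hblock (3*2^K) (by have : 1 ≤ 2^K := Nat.one_le_two_pow; omega)
      have h2K : (0:ℝ) < 2^K := by positivity
      have hcast : ((3*2^K : ℕ) : ℝ) = 3 * 2^K := by push_cast; ring
      rw [hcast] at hb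
      have hkey : (t:ℝ)/(3*2^K) + (1 + t - t/(2^K:ℝ)) ≤ 1 + t - t/(2^(K+1):ℝ) := by
        rw [pow_succ]
        set u := (t:ℝ)/(2^K:ℝ) with hu
        have hu0 : 0 ≤ u := by positivity
        have e1 : (t:ℝ)/(3*2^K) = u/3 := by rw [hu, div_div, mul_comm]
        have e2 : (t:ℝ)/((2^K:ℝ)*2) = u/2 := by rw [hu, div_div]
        rw [e1, e2]
        linarith
      linarith [IH, hb]
  have hsum : Summable f := by
    apply summable_of_sum_range_le hf0 (c := 1 + t)
    intro N
    have hsub : Finset.range N ⊆ Finset.range (3 * 2^N + 1) := by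
      apply Finset.range_subset_range.2
      have := Nat.lt_two_pow_self (n := N)
      omega
    calc ∑ i ∈ Finset.range N, f i ≤ ∑ i ∈ Finset.range (3 * 2^N + 1), f i :=
        Finset.sum_le_sum_of_subset_of_nonneg hsub (fun i _ _ => hf0 i)
      _ ≤ 1 + t - t/(2^N:ℝ) := hS N
      _ ≤ 1 + t := by
        have : (0:ℝ) ≤ t/(2^N:ℝ) := by positivity
        linarith
  exact not_summable_one_div_on_primes hsum
open Polynomial ArithmeticFunction Finset

theorem exists_neg (t : ℕ) (ht : Odd t) (h3 : 3 ≤ t) :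
    ∃ (n M₁ M₂ : ℕ), Odd n ∧ 1 < n ∧ Odd M₁ ∧ Odd M₂ ∧
    (cyclotomic n ℚ).coeff M₁ = 1 - t ∧ (cyclotomic n ℚ).coeff M₂ = 2 - t := by
  obtain ⟨x, hx3, hxt⟩ := primes_in_doubling t
  obtain ⟨F, hFsub, hFcard⟩ := Finset.exists_subset_card_eq hxt
  have hP : ∀ p ∈ F, p.Prime := fun p hp => (Finset.mem_filter.1 (hFsub hp)).2
  have hIoc : ∀ p ∈ F, x < p ∧ p ≤ 2 * x := fun p hp =>
    Finset.mem_Ioc.1 (Finset.mem_filter.1 (hFsub hp)).1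
  have hm : ∀ p ∈ F, x + 1 ≤ p := fun p hp => (hIoc p hp).1
  have hm3 : 3 ≤ x + 1 := by omega
  have hodd : Odd F.card := hFcard ▸ ht
  have hne : F.Nonempty := Finset.card_pos.1 (by omega)
  have hpodd : ∀ p ∈ F, Odd p := by
    intro p hp
    have := (hP p hp).eq_one_or_self_of_dvd
    rcases (hP p hp).eq_two_or_odd' with h | h
    · exfalso; have := (hIoc p hp).1; omega
    · exact h
  set M₁ := F.max' hne with hM₁
  have hM₁F : M₁ ∈ F := F.max'_mem hne
  have hcard1 : 1 ≤ F.card := by omega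
  have hne2 : (F.erase M₁).Nonempty := by
    rw [← Finset.card_pos, Finset.card_erase_of_mem hM₁F]; omega
  set M₂ := (F.erase M₁).max' hne2 with hM₂
  have hM₂F : M₂ ∈ F := Finset.mem_of_mem_erase ((F.erase M₁).max'_mem hne2)
  have hM₂ne : M₂ ≠ M₁ := Finset.ne_of_mem_erase ((F.erase M₁).max'_mem hne2)
  have hM₂lt : M₂ < M₁ := lt_of_le_of_ne (F.le_max' M₂ hM₂F) hM₂ne
  have hrange : ∀ M, M ∈ F → (1 ≤ M ∧ M < 2 * (x + 1)) := by
    intro M hMF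
    have h1 := (hIoc M hMF).1
    have h2 := (hIoc M hMF).2
    omega
  -- first coefficient
  have hfil1 : F.filter (· ≤ M₁) = F := by
    apply Finset.filter_true_of_mem
    intro p hp
    exact F.le_max' p hp
  have hc1 := key_coeff F hP (x+1) hm3 hm hodd M₁ (hrange M₁ hM₁F).1 (hrange M₁ hM₁F).2
  rw [hfil1, hFcard] at hc1
  -- second
  have hfil2 : F.filter (· ≤ M₂) = F.erase M₁ := by
    ext d
    simp only [Finset.mem_filter, Finset.mem_erase]
    constructor
    · rintro ⟨hd, hdle⟩
      exact ⟨by omega, hd⟩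
    · rintro ⟨hdne, hd⟩
      exact ⟨hd, (F.erase M₁).le_max' d (Finset.mem_erase.2 ⟨hdne, hd⟩)⟩
  have hc2 := key_coeff F hP (x+1) hm3 hm hodd M₂ (hrange M₂ hM₂F).1 (hrange M₂ hM₂F).2
  rw [hfil2, Finset.card_erase_of_mem hM₁F, hFcard] at hc2
  have hcast : ((t - 1 : ℕ) : ℚ) = (t : ℚ) - 1 := by
    push_cast [Nat.cast_sub (by omega : 1 ≤ t)]; ring
  rw [hcast] at hc2
  refine ⟨∏ p ∈ F, p, M₁, M₂, ?_, ?_, hpodd M₁ hM₁F, hpodd M₂ hM₂F, hc1, by rw [hc2]; ring⟩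
  · -- Odd prod
    rw [Nat.odd_iff, ← Nat.two_dvd_ne_zero]
    intro h2
    obtain ⟨p, hp, h2p⟩ := Nat.prime_two.prime.exists_mem_finset_dvd h2
    have := (Nat.prime_dvd_prime_iff_eq Nat.prime_two (hP p hp)).1 h2p
    have := (hIoc p hp).1
    omega
  · -- 1 < n
    have hMdvd : M₁ ∣ ∏ p ∈ F, p := Finset.dvd_prod_of_mem _ hM₁F
    have hpos : 0 < ∏ p ∈ F, p := Finset.prod_pos fun p hp => (hP p hp).pos
    have := Nat.le_of_dvd hpos hMdvd
    have := (hIoc M₁ hM₁F).1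
    omega

theorem realize_rat (z : ℤ) : ∃ n k : ℕ, (cyclotomic n ℚ).coeff k = (z : ℚ) := by
  rcases lt_trichotomy z 0 with hz | hz | hz
  · rcases Int.even_or_odd z with he | he
    · rw [Int.even_iff] at he
      obtain ⟨n, M₁, M₂, hn, hn1, _, _, hc1, _⟩ :=
        exists_neg (1 - z).toNat (by rw [Nat.odd_iff]; omega) (by omega)
      refine ⟨n, M₁, ?_⟩
      have h4 : (((1 - z).toNat : ℤ) : ℚ) = 1 - (z : ℚ) := by
        rw [Int.toNat_of_nonneg (by omega)]; push_cast; ring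
      have h5 : ((1 - z).toNat : ℚ) = 1 - (z : ℚ) := by exact_mod_cast h4
      rw [hc1, h5]; ring
    · rw [Int.odd_iff] at he
      obtain ⟨n, M₁, M₂, hn, hn1, _, _, _, hc2⟩ :=
        exists_neg (2 - z).toNat (by rw [Nat.odd_iff]; omega) (by omega)
      refine ⟨n, M₂, ?_⟩
      have h4 : (((2 - z).toNat : ℤ) : ℚ) = 2 - (z : ℚ) := by
        rw [Int.toNat_of_nonneg (by omega)]; push_cast; ring
      have h5 : ((2 - z).toNat : ℚ) = 2 - (z : ℚ) := by exact_mod_cast h4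
      rw [hc2, h5]; ring
  · refine ⟨1, 2, ?_⟩
    rw [cyclotomic_one, hz, coeff_sub, coeff_X, coeff_one]
    norm_num
  · rcases Int.even_or_odd z with he | he
    · rw [Int.even_iff] at he
      obtain ⟨n, M₁, M₂, hn, hn1, hModd, _, hc1, _⟩ :=
        exists_neg (z + 1).toNat (by rw [Nat.odd_iff]; omega) (by omega)
      refine ⟨2 * n, M₁, ?_⟩
      rw [cyclo_two_mul n hn hn1, coeff_comp_neg_X, hModd.neg_one_pow, hc1]
      have h4 : (((z + 1).toNat : ℤ) : ℚ) = (z : ℚ) + 1 := by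
        rw [Int.toNat_of_nonneg (by omega)]; push_cast; ring
      have h5 : ((z + 1).toNat : ℚ) = (z : ℚ) + 1 := by exact_mod_cast h4
      rw [h5]; ring
    · rw [Int.odd_iff] at he
      obtain ⟨n, M₁, M₂, hn, hn1, _, hModd, _, hc2⟩ :=
        exists_neg (z + 2).toNat (by rw [Nat.odd_iff]; omega) (by omega)
      refine ⟨2 * n, M₂, ?_⟩
      rw [cyclo_two_mul n hn hn1, coeff_comp_neg_X, hModd.neg_one_pow, hc2]
      have h4 : (((z + 2).toNat : ℤ) : ℚ) = (z : ℚ) + 2 := by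
        rw [Int.toNat_of_nonneg (by omega)]; push_cast; ring
      have h5 : ((z + 2).toNat : ℚ) = (z : ℚ) + 2 := by exact_mod_cast h4
      rw [h5]; ring

theorem cyclotomic_coeff_surjective :
    {z : ℤ | ∃ n k : ℕ, (Polynomial.cyclotomic n ℤ).coeff k = z} = Set.univ := by
  apply Set.eq_univ_of_forall
  intro z
  obtain ⟨n, k, hc⟩ := realize_rat z
  refine ⟨n, k, ?_⟩
  rw [← map_cyclotomic_int n ℚ, coeff_map] at hc
  have : (((cyclotomic n ℤ).coeff k : ℤ) : ℚ) = (z : ℚ) := hc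
  exact_mod_cast this
end

section
/- Every integer occurs as a coefficient of a cyclotomic polynomial of even index: {a_{2n}(k) : n, k ∈ ℕ} = ℤ. -/
open Polynomial Finset ArithmeticFunction
open scoped ArithmeticFunction.Moebius

/-- Truncated congruence of polynomials: coefficients agree below `K`. -/
def MEq (K : ℕ) (f g : ℤ[X]) : Prop := ∀ j < K, f.coeff j = g.coeff j

lemma MEq.refl {K : ℕ} (f : ℤ[X]) : MEq K f f := fun _ _ => rfl

lemma MEq.symm {K : ℕ} {f g : ℤ[X]} (h : MEq K f g) : MEq K g f := fun j hj => (h j hj).symm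

lemma MEq.trans {K : ℕ} {f g h : ℤ[X]} (h1 : MEq K f g) (h2 : MEq K g h) : MEq K f h :=
  fun j hj => (h1 j hj).trans (h2 j hj)

lemma MEq.mul {K : ℕ} {f f' g g' : ℤ[X]} (h1 : MEq K f f') (h2 : MEq K g g') :
    MEq K (f * g) (f' * g') := by
  intro j hj
  rw [coeff_mul, coeff_mul]
  refine Finset.sum_congr rfl fun x hx => ?_
  rw [Finset.HasAntidiagonal.mem_antidiagonal] at hx
  have hx1 : x.1 < K := lt_of_le_of_lt (le_trans (Nat.le_add_right _ _) hx.le) hj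
  have hx2 : x.2 < K := lt_of_le_of_lt (le_trans (Nat.le_add_left _ _) hx.le) hj
  rw [h1 x.1 hx1, h2 x.2 hx2]

lemma MEq.prod_const {K : ℕ} {α : Type*} {S : Finset α} {f : α → ℤ[X]} {c : ℤ[X]}
    (h : ∀ a ∈ S, MEq K (f a) c) : MEq K (∏ a ∈ S, f a) (c ^ S.card) := by
  classical
  induction S using Finset.induction_on with
  | empty => simpa using MEq.refl 1
  | @insert a S hnot ih =>
    rw [Finset.prod_insert hnot, Finset.card_insert_of_notMem hnot, pow_succ, mul_comm (c ^ S.card) c]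
    exact (h a (Finset.mem_insert_self a S)).mul (ih fun b hb => h b (Finset.mem_insert_of_mem hb))

lemma MEq.cancel {K : ℕ} {f g h : ℤ[X]} (h0 : h.coeff 0 = 1)
    (he : MEq K (f * h) (g * h)) : MEq K f g := by
  intro j hj
  induction j using Nat.strong_induction_on with
  | _ j ih =>
    have hmem : ((j, 0) : ℕ × ℕ) ∈ Finset.HasAntidiagonal.antidiagonal j := by
      simp [Finset.HasAntidiagonal.mem_antidiagonal]
    have key := he j hj
    rw [coeff_mul, coeff_mul, ← Finset.add_sum_erase _ _ hmem,
      ← Finset.add_sum_erase _ _ hmem] at key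
    have hrest : ∑ x ∈ (Finset.HasAntidiagonal.antidiagonal j).erase (j, 0), f.coeff x.1 * h.coeff x.2
        = ∑ x ∈ (Finset.HasAntidiagonal.antidiagonal j).erase (j, 0), g.coeff x.1 * h.coeff x.2 := by
      refine Finset.sum_congr rfl fun x hx => ?_
      have hx1 : x ∈ Finset.HasAntidiagonal.antidiagonal j := Finset.mem_of_mem_erase hx
      rw [Finset.HasAntidiagonal.mem_antidiagonal] at hx1
      have hne : x ≠ (j, 0) := Finset.ne_of_mem_erase hx
      have hlt : x.1 < j := by
        rcases Nat.lt_or_ge x.1 j with h' | h'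
        · exact h'
        · exfalso; apply hne
          have : x.1 = j := le_antisymm (by omega) h'
          have : x.2 = 0 := by omega
          exact Prod.ext (by omega) this
      rw [ih x.1 hlt (hlt.trans hj)]
    rw [hrest, h0] at key
    simpa using key

lemma MEq.X_pow_sub_one_big {K d : ℕ} (h : K ≤ d) : MEq K ((X : ℤ[X]) ^ d - 1) (-1) := by
  intro j hj
  rw [coeff_sub, coeff_X_pow, if_neg (by omega)]
  simp


lemma MEq.of_eq {K : ℕ} {f g : ℤ[X]} (h : f = g) : MEq K f g := fun _ _ => by rw [h]

lemma MEq.add {K : ℕ} {f f' g g' : ℤ[X]} (h1 : MEq K f f') (h2 : MEq K g g') :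
    MEq K (f + g) (f' + g') := fun j hj => by
  rw [Polynomial.coeff_add, Polynomial.coeff_add, h1 j hj, h2 j hj]

lemma MEq.sub {K : ℕ} {f f' g g' : ℤ[X]} (h1 : MEq K f f') (h2 : MEq K g g') :
    MEq K (f - g) (f' - g') := fun j hj => by
  rw [Polynomial.coeff_sub, Polynomial.coeff_sub, h1 j hj, h2 j hj]

lemma coeff_sum_X_pow (S : Finset ℕ) (i : ℕ) :
    (∑ p ∈ S, (Polynomial.X : ℤ[X]) ^ p).coeff i = if i ∈ S then 1 else 0 := by
  classical
  rw [Polynomial.finset_sum_coeff,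
    Finset.sum_congr rfl (fun p _ => Polynomial.coeff_X_pow p i)]
  exact Finset.sum_ite_eq S i (fun _ => 1)

lemma prod_X_pow_sub_one_reduce (K : ℕ) (D : Finset ℕ) :
    MEq K (∏ d ∈ D, ((Polynomial.X : ℤ[X]) ^ d - 1))
      ((∏ d ∈ D.filter (· < K), ((Polynomial.X : ℤ[X]) ^ d - 1)) *
        (-1) ^ (D.filter (fun d => ¬ d < K)).card) := by
  classical
  conv_lhs => rw [← Finset.prod_filter_mul_prod_filter_not D (· < K)]
  exact (MEq.refl _).mul (MEq.prod_const fun d hd => MEq.X_pow_sub_one_big (by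
    simp only [Finset.mem_filter] at hd; omega))


lemma cube_lt_two_pow {m : ℕ} (h : 10 ≤ m) : m ^ 3 < 2 ^ m := by
  induction m with
  | zero => omega
  | succ n ih =>
    rcases Nat.lt_or_ge n 10 with h' | h'
    · interval_cases n <;> simp_all <;> omega
    · have h1 := ih h'
      have h2 : (n + 1) ^ 3 ≤ 2 * n ^ 3 := by
        have : 3*n^2 + 3*n + 1 ≤ n^3 := by nlinarith
        nlinarith
      calc (n+1)^3 ≤ 2 * n^3 := h2
        _ < 2 * 2^n := by omega
        _ = 2 ^ (n+1) := by ring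

/-- Chebyshev-type bound: the central binomial coefficient is at most `(2n)^π(2n)`. -/
lemma centralBinom_le_pow (n : ℕ) (hn : 0 < n) :
    n.centralBinom ≤ (2 * n) ^ ((Finset.range (2 * n + 1)).filter Nat.Prime).card := by
  have hc : n.centralBinom ≠ 0 := n.centralBinom_ne_zero
  conv_lhs => rw [← Nat.factorization_prod_pow_eq_self hc]
  rw [Nat.prod_factorization_eq_prod_primeFactors]
  have hsub : n.centralBinom.primeFactors ⊆ (Finset.range (2 * n + 1)).filter Nat.Prime := by
    intro p hp
    have hp' := Nat.prime_of_mem_primeFactors hp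
    have hdvd := Nat.dvd_of_mem_primeFactors hp
    have h1 : 1 ≤ n.centralBinom.factorization p :=
      (Nat.Prime.factorization_pos_of_dvd hp' hc hdvd)
    have h2 : p ^ n.centralBinom.factorization p ≤ 2 * n := by
      rw [Nat.centralBinom_eq_two_mul_choose]
      exact Nat.pow_factorization_choose_le (by omega)
    have hple : p ≤ 2 * n := by
      calc p = p ^ 1 := (pow_one p).symm
        _ ≤ p ^ n.centralBinom.factorization p := Nat.pow_le_pow_right hp'.pos h1
        _ ≤ 2 * n := h2
    simp only [Finset.mem_filter, Finset.mem_range]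
    exact ⟨by omega, hp'⟩
  calc ∏ p ∈ n.centralBinom.primeFactors, p ^ n.centralBinom.factorization p
      ≤ ∏ _p ∈ n.centralBinom.primeFactors, (2 * n) := by
        refine Finset.prod_le_prod (fun _ _ => Nat.zero_le _) (fun p hp => ?_)
        rw [Nat.centralBinom_eq_two_mul_choose]
        exact Nat.pow_factorization_choose_le (by omega)
    _ = (2 * n) ^ n.centralBinom.primeFactors.card := by rw [Finset.prod_const]
    _ ≤ (2 * n) ^ ((Finset.range (2 * n + 1)).filter Nat.Prime).card :=
        Nat.pow_le_pow_right (by omega) (Finset.card_le_card hsub)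

lemma pi_le (t : ℕ)
    (h : ∀ N, 2 ≤ N → ((Finset.Ioo N (2 * N)).filter Nat.Prime).card < t)
    (k : ℕ) (hk : 2 ≤ k) :
    ((Finset.range (2 ^ k)).filter Nat.Prime).card ≤ 2 + k * t := by
  induction k with
  | zero => omega
  | succ k ih =>
    rcases Nat.lt_or_ge k 2 with hk' | hk'
    · have hk2 : k = 1 := by omega
      subst hk2
      have h4 : ((Finset.range (2 ^ (1+1))).filter Nat.Prime).card ≤ 2 := by decide
      omega
    · have step : ((Finset.range (2 ^ (k+1))).filter Nat.Prime).card ≤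
          ((Finset.range (2 ^ k)).filter Nat.Prime).card +
          ((Finset.Ioo (2 ^ k) (2 * 2 ^ k)).filter Nat.Prime).card := by
        have hsub : (Finset.range (2 ^ (k+1))).filter Nat.Prime ⊆
            ((Finset.range (2 ^ k)).filter Nat.Prime) ∪
            ((Finset.Ioo (2 ^ k) (2 * 2 ^ k)).filter Nat.Prime) := by
          intro p hp
          simp only [Finset.mem_filter, Finset.mem_range, Finset.mem_union, Finset.mem_Ioo] at hp ⊢
          obtain ⟨hlt, hprime⟩ := hp
          rcases Nat.lt_or_ge p (2 ^ k) with h1 | h1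
          · exact Or.inl ⟨h1, hprime⟩
          · rcases Nat.eq_or_lt_of_le h1 with h2 | h2
            · exfalso
              have hp2 : p = 2 := by
                rcases (Nat.Prime.eq_one_or_self_of_dvd hprime 2 (by
                  rw [← h2]; exact dvd_pow_self 2 (by omega))) with h3 | h3
                · omega
                · omega
              have h4 : (4:ℕ) ≤ 2 ^ k := by
                calc (4:ℕ) = 2 ^ 2 := by norm_num
                  _ ≤ 2 ^ k := Nat.pow_le_pow_right (by omega) hk'
              omega
            · exact Or.inr ⟨⟨h2, by rw [pow_succ] at hlt; omega⟩, hprime⟩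
        calc _ ≤ _ := Finset.card_le_card hsub
          _ ≤ _ := Finset.card_union_le _ _
      have hwin := h (2 ^ k) (by calc 2 ≤ 2 ^ 2 := by norm_num
                                   _ ≤ 2 ^ k := Nat.pow_le_pow_right (by omega) hk')
      have := ih hk'
      calc ((Finset.range (2 ^ (k+1))).filter Nat.Prime).card
          ≤ (2 + k * t) + t := by omega
        _ ≤ 2 + (k+1) * t := by ring_nf; omega

lemma primes_window (t : ℕ) :
    ∃ N, 2 ≤ N ∧ t ≤ ((Finset.Ioo N (2 * N)).filter Nat.Prime).card := by
  by_contra hcon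
  push_neg at hcon
  have h : ∀ N, 2 ≤ N → ((Finset.Ioo N (2 * N)).filter Nat.Prime).card < t := by
    intro N hN; exact hcon N hN
  -- choose k
  set m : ℕ := max (t + 4) 10 with hm
  have hm10 : 10 ≤ m := le_max_right _ _
  have hmt : t + 4 ≤ m := le_max_left _ _
  set k : ℕ := m - 1 with hk
  have hk2 : 2 ≤ k := by omega
  have hkm : k + 1 = m := by omega
  -- Chebyshev lower bound at n = 2^k
  have hn : (0:ℕ) < 2 ^ k := pow_pos (by omega) k
  have cheb := Nat.four_pow_le_two_mul_self_mul_centralBinom (2 ^ k) hn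
  have cb := centralBinom_le_pow (2 ^ k) hn
  set E : ℕ := ((Finset.range (2 * 2 ^ k + 1)).filter Nat.Prime).card with hE
  have hpi : E ≤ 3 + (k + 1) * t := by
    have hsub : (Finset.range (2 * 2 ^ k + 1)).filter Nat.Prime ⊆
        insert (2 * 2 ^ k) ((Finset.range (2 ^ (k + 1))).filter Nat.Prime) := by
      intro p hp
      simp only [Finset.mem_filter, Finset.mem_range, Finset.mem_insert] at hp ⊢
      rcases Nat.lt_or_ge p (2 * 2 ^ k) with h1 | h1
      · exact Or.inr ⟨by rw [pow_succ]; omega, hp.2⟩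
      · exact Or.inl (by omega)
    have h2 := pi_le t h (k + 1) (by omega)
    calc E ≤ (insert (2 * 2 ^ k) ((Finset.range (2 ^ (k + 1))).filter Nat.Prime)).card :=
        Finset.card_le_card hsub
      _ ≤ ((Finset.range (2 ^ (k + 1))).filter Nat.Prime).card + 1 :=
        Finset.card_insert_le _ _
      _ ≤ 3 + (k + 1) * t := by omega
  have key : (4:ℕ) ^ 2 ^ k ≤ (2 * 2 ^ k) ^ (E + 1) := by
    calc (4:ℕ) ^ 2 ^ k ≤ 2 * 2 ^ k * (2 ^ k).centralBinom := cheb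
      _ ≤ 2 * 2 ^ k * (2 * 2 ^ k) ^ E := Nat.mul_le_mul_left _ cb
      _ = (2 * 2 ^ k) ^ (E + 1) := by rw [pow_succ, mul_comm]
  have lhs2 : (4:ℕ) ^ 2 ^ k = 2 ^ 2 ^ (k + 1) := by
    rw [show (4:ℕ) = 2 ^ 2 by norm_num, ← pow_mul, pow_succ, mul_comm]
  have rhs2 : (2 * 2 ^ k : ℕ) ^ (E + 1) = 2 ^ ((k + 1) * (E + 1)) := by
    rw [← pow_succ', ← pow_mul]
  rw [lhs2, rhs2] at key
  have hexp : 2 ^ (k + 1) ≤ (k + 1) * (E + 1) :=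
    (Nat.pow_le_pow_iff_right (by omega)).mp key
  have hb : (k + 1) * (E + 1) ≤ m ^ 3 := by
    rw [hkm] at *
    have h1 : E + 1 ≤ 4 + m * t := by omega
    calc m * (E + 1) ≤ m * (4 + m * t) := Nat.mul_le_mul_left _ h1
      _ ≤ m * (m * (t + 4)) := Nat.mul_le_mul_left _ (by nlinarith)
      _ = m * m * (t + 4) := by ring
      _ ≤ m * m * m := Nat.mul_le_mul_left _ (by omega)
      _ = m ^ 3 := by ring
  have hfin := cube_lt_two_pow hm10
  have hfin2 : (2:ℕ) ^ (k + 1) ≤ m ^ 3 := le_trans hexp hb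
  rw [hkm] at hfin2
  omega


lemma cyclotomic_mul_prod_eq {m : ℕ} (hm : 0 < m) (hsq : Squarefree m) :
    Polynomial.cyclotomic m ℤ *
      ∏ d ∈ m.divisors.filter (fun d => μ (m / d) = -1), ((X : ℤ[X]) ^ d - 1) =
    ∏ d ∈ m.divisors.filter (fun d => μ (m / d) = 1), ((X : ℤ[X]) ^ d - 1) := by
  apply IsFractionRing.injective ℤ[X] (RatFunc ℤ)
  set alg := algebraMap ℤ[X] (RatFunc ℤ) with halg
  have hg : ∀ d ∈ m.divisors, alg ((X : ℤ[X]) ^ d - 1) ≠ 0 := by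
    intro d hd
    have hd0 : 0 < d := Nat.pos_of_mem_divisors hd
    rw [halg, Ne, IsFractionRing.to_map_eq_zero_iff]
    simpa using X_pow_sub_C_ne_zero hd0 (1 : ℤ)
  have base := Polynomial.cyclotomic_eq_prod_X_pow_sub_one_pow_moebius (n := m) ℤ
  have base2 : alg (cyclotomic m ℤ) =
      ∏ d ∈ m.divisors, alg ((X : ℤ[X]) ^ d - 1) ^ (μ (m / d) : ℤ) := by
    rw [base, ← Nat.prod_divisorsAntidiagonal' (fun a b => alg ((X : ℤ[X]) ^ b - 1) ^ (μ a : ℤ))]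
  have hdichot : ∀ d ∈ m.divisors.filter (fun d => ¬ μ (m / d) = 1), μ (m / d) = -1 := by
    intro d hd
    rw [Finset.mem_filter] at hd
    have hdvd : m / d ∣ m := Nat.div_dvd_of_dvd (Nat.dvd_of_mem_divisors hd.1)
    have hsf : Squarefree (m / d) := hsq.squarefree_of_dvd hdvd
    rw [moebius_apply_of_squarefree hsf] at hd ⊢
    rcases Nat.even_or_odd (cardFactors (m / d)) with he | ho
    · exact absurd (Even.neg_one_pow he) hd.2
    · exact Odd.neg_one_pow ho
  rw [← Finset.prod_filter_mul_prod_filter_not m.divisors (fun d => μ (m / d) = 1)] at base2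
  have hpos : ∏ d ∈ m.divisors.filter (fun d => μ (m / d) = 1),
      alg ((X : ℤ[X]) ^ d - 1) ^ (μ (m / d) : ℤ) =
      ∏ d ∈ m.divisors.filter (fun d => μ (m / d) = 1), alg ((X : ℤ[X]) ^ d - 1) := by
    refine Finset.prod_congr rfl fun d hd => ?_
    rw [Finset.mem_filter] at hd
    rw [hd.2]; norm_num
  have hneg : ∏ d ∈ m.divisors.filter (fun d => ¬ μ (m / d) = 1),
      alg ((X : ℤ[X]) ^ d - 1) ^ (μ (m / d) : ℤ) =
      (∏ d ∈ m.divisors.filter (fun d => ¬ μ (m / d) = 1), alg ((X : ℤ[X]) ^ d - 1))⁻¹ := by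
    rw [← Finset.prod_inv_distrib]
    refine Finset.prod_congr rfl fun d hd => ?_
    rw [hdichot d hd]; norm_num
  rw [hpos, hneg] at base2
  have hprodne : (∏ d ∈ m.divisors.filter (fun d => ¬ μ (m / d) = 1),
      alg ((X : ℤ[X]) ^ d - 1)) ≠ 0 := by
    rw [Finset.prod_ne_zero_iff]
    exact fun d hd => hg d (Finset.mem_filter.mp hd).1
  have hsets : m.divisors.filter (fun d => μ (m / d) = -1) =
      m.divisors.filter (fun d => ¬ μ (m / d) = 1) := by
    refine Finset.filter_congr fun d hd => ?_
    constructor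
    · intro h; rw [h]; norm_num
    · intro h; exact hdichot d (Finset.mem_filter.mpr ⟨hd, h⟩)
  rw [map_mul, map_prod, base2, hsets, inv_mul_cancel_right₀ hprodne, map_prod]



lemma squarefree_prod_primes (P : Finset ℕ) (hP : ∀ p ∈ P, Nat.Prime p)
    (h3 : ∀ p ∈ P, 3 ≤ p) : Squarefree (∏ p ∈ P, p) := by
  classical
  induction P using Finset.induction_on with
  | empty => simp
  | @insert a S ha ih =>
    have haP : Nat.Prime a := hP a (Finset.mem_insert_self a S)
    rw [Finset.prod_insert ha, Nat.squarefree_mul_iff]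
    refine ⟨?_, haP.squarefree, ih (fun p hp => hP p (Finset.mem_insert_of_mem hp))
      (fun p hp => h3 p (Finset.mem_insert_of_mem hp))⟩
    refine Nat.Coprime.prod_right fun p hp => ?_
    have hpP : Nat.Prime p := hP p (Finset.mem_insert_of_mem hp)
    exact (Nat.coprime_primes haP hpP).mpr (by rintro rfl; exact ha hp)

lemma coprime_two_prod (P : Finset ℕ) (hP : ∀ p ∈ P, Nat.Prime p)
    (h3 : ∀ p ∈ P, 3 ≤ p) : Nat.Coprime 2 (∏ p ∈ P, p) := by
  refine Nat.Coprime.prod_right fun p hp => ?_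
  exact (Nat.coprime_primes Nat.prime_two (hP p hp)).mpr (by have := h3 p hp; omega)

lemma moebius_prod_primes (P : Finset ℕ) (hP : ∀ p ∈ P, Nat.Prime p) :
    μ (∏ p ∈ P, p) = (-1) ^ P.card := by
  classical
  rw [isMultiplicative_moebius.map_prod _ P ?_]
  · rw [Finset.prod_congr rfl (fun p hp => moebius_apply_prime (hP p hp)), Finset.prod_const]
  · intro x hx y hy hxy
    simp only [Function.onFun]
    exact (Nat.coprime_primes (hP x hx) (hP y hy)).mpr hxy

lemma main_coeff_formula (P : Finset ℕ) (hne : P.Nonempty)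
    (hP : ∀ p ∈ P, Nat.Prime p) (h3 : ∀ p ∈ P, 3 ≤ p)
    (hodd : Odd P.card)
    (hwin : ∀ p ∈ P, p < 2 * P.min' hne)
    (j : ℕ) (hj : j < 2 * P.min' hne) :
    (Polynomial.cyclotomic (2 * ∏ p ∈ P, p) ℤ).coeff j
      = (-1) ^ j * (1 - ((P.filter (· ≤ j)).card : ℤ)) := by
  classical
  set q1 : ℕ := P.min' hne with hq1
  set K : ℕ := 2 * q1 with hK
  set Q : ℕ := ∏ p ∈ P, p with hQ
  set m : ℕ := 2 * Q with hm
  have hq1P : q1 ∈ P := P.min'_mem hne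
  have hq13 : 3 ≤ q1 := h3 q1 hq1P
  have hq1le : ∀ p ∈ P, q1 ≤ p := fun p hp => P.min'_le p hp
  have hQpos : 0 < Q := Finset.prod_pos fun p hp => (hP p hp).pos
  have hQ3 : 3 ≤ Q := le_trans hq13 (Finset.single_le_prod' (fun p hp => (hP p hp).one_lt.le) hq1P)
  have hm1 : 1 < m := by omega
  have hQsf : Squarefree Q := squarefree_prod_primes P hP h3
  have hmsf : Squarefree m := by
    rw [hm, Nat.squarefree_mul_iff]
    exact ⟨coprime_two_prod P hP h3, Nat.prime_two.squarefree, hQsf⟩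
  -- μ values
  have hmuQ : μ Q = -1 := by
    rw [hQ, moebius_prod_primes P hP, Odd.neg_one_pow hodd]
  have hmum : μ m = 1 := by
    rw [hm, isMultiplicative_moebius.map_mul_of_coprime (coprime_two_prod P hP h3),
      moebius_apply_prime Nat.prime_two, hmuQ]
    ring
  have hmup : ∀ p ∈ P, μ (m / p) = -1 := by
    intro p hp
    have hpp := hP p hp
    have hQp : Q = p * ∏ q ∈ P.erase p, q := (Finset.mul_prod_erase P _ hp).symm
    have hmp : m / p = 2 * ∏ q ∈ P.erase p, q := by
      rw [hm, hQp, show 2 * (p * ∏ q ∈ P.erase p, q) = p * (2 * ∏ q ∈ P.erase p, q) by ring,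
        Nat.mul_div_cancel_left _ hpp.pos]
    rw [hmp, isMultiplicative_moebius.map_mul_of_coprime
        (coprime_two_prod _ (fun q hq => hP q (Finset.mem_of_mem_erase hq))
          (fun q hq => h3 q (Finset.mem_of_mem_erase hq))),
      moebius_apply_prime Nat.prime_two,
      moebius_prod_primes _ (fun q hq => hP q (Finset.mem_of_mem_erase hq)),
      Finset.card_erase_of_mem hp]
    obtain ⟨r, hr⟩ := hodd
    have hcard1 : 1 ≤ P.card := Finset.card_pos.mpr hne
    rw [show P.card - 1 = 2 * r by omega]
    rw [pow_mul]
    norm_num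
  -- small divisors classification
  have hclass : m.divisors.filter (· < K) = insert 1 (insert 2 P) := by
    ext d
    simp only [Finset.mem_filter, Nat.mem_divisors, Finset.mem_insert]
    constructor
    · rintro ⟨⟨hdvd, _⟩, hdK⟩
      by_cases hex : ∃ p ∈ P, p ∣ d
      · obtain ⟨p, hp, hpd⟩ := hex
        obtain ⟨c, hc⟩ := hpd
        rcases Nat.lt_or_ge c 2 with hc2 | hc2
        · interval_cases c
          · exfalso; rw [hc, mul_zero] at hdvd; simp at hdvd; omega
          · right; right; rw [hc, mul_one]; exact hp
        · exfalso
          have : 2 * q1 ≤ d := by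
            calc 2 * q1 ≤ 2 * p := by have := hq1le p hp; omega
              _ ≤ c * p := Nat.mul_le_mul_right _ hc2
              _ = d := by rw [hc]; ring
          omega
      · push_neg at hex
        have hcop : Nat.Coprime d Q := by
          rw [hQ]
          refine Nat.Coprime.prod_right fun p hp => ?_
          exact Nat.coprime_comm.mp ((Nat.Prime.coprime_iff_not_dvd (hP p hp)).mpr (hex p hp))
        have hd2 : d ∣ 2 := hcop.dvd_of_dvd_mul_right (by rwa [← hm])
        have := Nat.le_of_dvd (by norm_num) hd2
        interval_cases d
        · exfalso; simp at hd2
        · left; rfl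
        · right; left; rfl
    · have hm0 : m ≠ 0 := by omega
      rintro (rfl | rfl | hp)
      · exact ⟨⟨one_dvd m, hm0⟩, by omega⟩
      · exact ⟨⟨Dvd.intro Q rfl, hm0⟩, by omega⟩
      · refine ⟨⟨Dvd.dvd.mul_left (Finset.dvd_prod_of_mem _ hp) 2, hm0⟩, hwin d hp⟩
  -- the sum of X^p and its properties
  set Sp : ℤ[X] := ∑ p ∈ P, (X : ℤ[X]) ^ p with hSp
  have hSS : MEq K (Sp * Sp) 0 := by
    intro i hi
    rw [coeff_mul, coeff_zero]
    refine Finset.sum_eq_zero fun x hx => ?_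
    rw [Finset.HasAntidiagonal.mem_antidiagonal] at hx
    rw [hSp, coeff_sum_X_pow, coeff_sum_X_pow]
    by_cases h1 : x.1 ∈ P
    · by_cases h2 : x.2 ∈ P
      · have := hq1le x.1 h1
        have := hq1le x.2 h2
        exact absurd hi (by omega)
      · rw [if_neg h2, mul_zero]
    · rw [if_neg h1, zero_mul]
  -- the candidate polynomial G
  set sP : ℕ → ℕ := fun i => (P.filter (· ≤ i)).card with hsPdef
  set G : ℤ[X] := ∑ i ∈ Finset.range K, C ((-1) ^ i * (1 - (sP i : ℤ))) * X ^ i with hGdef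
  have hGcoeff : ∀ i < K, G.coeff i = (-1) ^ i * (1 - (sP i : ℤ)) := by
    intro i hi
    rw [hGdef, finset_sum_coeff,
      Finset.sum_congr rfl (fun n _ => by
        rw [coeff_C_mul, coeff_X_pow, mul_ite, mul_one, mul_zero]),
      Finset.sum_ite_eq (Finset.range K) i _, if_pos (Finset.mem_range.mpr hi)]
  have hsP0 : sP 0 = 0 := by
    simp only [hsPdef]
    rw [Finset.card_eq_zero, Finset.filter_eq_empty_iff]
    intro p hp
    have := h3 p hp
    omega
  have hsstep : ∀ i : ℕ, sP (i + 1) = sP i + (if (i + 1) ∈ P then 1 else 0) := by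
    intro i
    simp only [hsPdef]
    by_cases hmem : (i + 1) ∈ P
    · rw [if_pos hmem]
      have hset : P.filter (fun p => p ≤ i + 1) = insert (i + 1) (P.filter (fun p => p ≤ i)) := by
        ext p
        simp only [Finset.mem_filter, Finset.mem_insert]
        constructor
        · rintro ⟨hp, hle⟩
          rcases eq_or_ne p (i + 1) with rfl | hne
          · exact Or.inl rfl
          · exact Or.inr ⟨hp, by omega⟩
        · rintro (rfl | ⟨hp, hle⟩)
          · exact ⟨hmem, le_refl _⟩
          · exact ⟨hp, by omega⟩
      rw [hset, Finset.card_insert_of_notMem (by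
        simp only [Finset.mem_filter]
        rintro ⟨-, hle⟩
        omega)]
    · rw [if_neg hmem]
      have hset : P.filter (fun p => p ≤ i + 1) = P.filter (fun p => p ≤ i) := by
        ext p
        simp only [Finset.mem_filter]
        constructor
        · rintro ⟨hp, hle⟩
          refine ⟨hp, ?_⟩
          rcases eq_or_ne p (i + 1) with rfl | hne
          · exact absurd hp hmem
          · omega
        · rintro ⟨hp, hle⟩
          exact ⟨hp, by omega⟩
      rw [hset, Nat.add_zero]
  have hstep : MEq K ((1 + X) * G) (1 + Sp) := by
    intro i hi
    have hG1 : ((1 + X) * G).coeff i = G.coeff i + (X * G).coeff i := by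
      rw [add_mul, one_mul, coeff_add]
    rw [hG1, coeff_add, coeff_one, hSp, coeff_sum_X_pow]
    cases i with
    | zero =>
      rw [mul_coeff_zero, coeff_X_zero, zero_mul, add_zero, hGcoeff 0 hi, hsP0]
      rw [if_pos rfl, if_neg (by intro h; have := h3 0 h; omega)]
      norm_num
    | succ n =>
      rw [coeff_X_mul, hGcoeff (n + 1) hi, hGcoeff n (by omega), hsstep n,
        if_neg (Nat.succ_ne_zero n)]
      by_cases hmem : (n + 1) ∈ P
      · have hoddn1 : Odd (n + 1) := (hP _ hmem).odd_of_ne_two (by have := h3 _ hmem; omega)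
        have hevenn : Even n := Nat.Odd.sub_odd hoddn1 odd_one
        rw [if_pos hmem, if_pos hmem]
        push_cast
        rw [pow_succ, Even.neg_one_pow hevenn]
        ring
      · rw [if_neg hmem, if_neg hmem]
        push_cast
        rw [pow_succ]
        ring
  -- product over P of (X^p - 1)
  have hprodS : ∀ S : Finset ℕ, S ⊆ P → MEq K (∏ p ∈ S, ((X : ℤ[X]) ^ p - 1))
      ((-1 : ℤ[X]) ^ S.card * (1 - ∑ p ∈ S, (X : ℤ[X]) ^ p)) := by
    intro S
    induction S using Finset.induction_on with
    | empty => intro _; exact MEq.of_eq (by simp)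
    | @insert a S ha ih =>
      intro hsub
      have haP : a ∈ P := hsub (Finset.mem_insert_self a S)
      have hSsub : S ⊆ P := (Finset.insert_subset_iff.mp hsub).2
      rw [Finset.prod_insert ha, Finset.sum_insert ha, Finset.card_insert_of_notMem ha]
      have h1 : MEq K (((X : ℤ[X]) ^ a - 1) * ∏ p ∈ S, ((X : ℤ[X]) ^ p - 1))
          (((X : ℤ[X]) ^ a - 1) * ((-1 : ℤ[X]) ^ S.card * (1 - ∑ p ∈ S, (X : ℤ[X]) ^ p))) :=
        (MEq.refl _).mul (ih hSsub)
      refine h1.trans ?_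
      have hXa : MEq K ((X : ℤ[X]) ^ a * ∑ p ∈ S, (X : ℤ[X]) ^ p) 0 := by
        intro i hi
        rw [coeff_mul, coeff_zero]
        refine Finset.sum_eq_zero fun x hx => ?_
        rw [Finset.HasAntidiagonal.mem_antidiagonal] at hx
        rw [coeff_X_pow, coeff_sum_X_pow]
        by_cases h1' : x.1 = a
        · by_cases h2' : x.2 ∈ S
          · have := hq1le a haP
            have := hq1le x.2 (hSsub h2')
            exact absurd hi (by omega)
          · rw [if_neg h2', mul_zero]
        · rw [if_neg h1', zero_mul]
      have e1 : ((X : ℤ[X]) ^ a - 1) * ((-1 : ℤ[X]) ^ S.card * (1 - ∑ p ∈ S, (X : ℤ[X]) ^ p)) =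
          (-1 : ℤ[X]) ^ (S.card + 1) * (1 - ((X : ℤ[X]) ^ a + ∑ p ∈ S, (X : ℤ[X]) ^ p)) +
          (-1 : ℤ[X]) ^ (S.card + 1) * ((X : ℤ[X]) ^ a * ∑ p ∈ S, (X : ℤ[X]) ^ p) := by
        ring
      refine (MEq.of_eq e1).trans ?_
      have h2 : MEq K ((-1 : ℤ[X]) ^ (S.card + 1) * ((X : ℤ[X]) ^ a * ∑ p ∈ S, (X : ℤ[X]) ^ p))
          0 := ((MEq.refl _).mul hXa).trans (MEq.of_eq (mul_zero _))
      exact ((MEq.refl ((-1 : ℤ[X]) ^ (S.card + 1) *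
        (1 - ((X : ℤ[X]) ^ a + ∑ p ∈ S, (X : ℤ[X]) ^ p)))).add h2).trans
        (MEq.of_eq (by ring))
  -- Dneg and Dpos small parts
  have h2notP : (2 : ℕ) ∉ P := fun h => by have := h3 2 h; omega
  have h1notP : (1 : ℕ) ∉ P := fun h => by have := h3 1 h; omega
  have hDnegsmall : (m.divisors.filter (fun d => μ (m / d) = -1)).filter (· < K)
      = insert 2 P := by
    ext d
    simp only [Finset.mem_filter, Finset.mem_insert]
    constructor
    · rintro ⟨⟨hdvd, hmu⟩, hdK⟩
      have hd : d ∈ m.divisors.filter (· < K) := Finset.mem_filter.mpr ⟨hdvd, hdK⟩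
      rw [hclass] at hd
      simp only [Finset.mem_insert] at hd
      rcases hd with rfl | rfl | hd
      · rw [Nat.div_one, hmum] at hmu; exact absurd hmu (by norm_num)
      · exact Or.inl rfl
      · exact Or.inr hd
    · rintro (rfl | hd)
      · have hdvd : (2 : ℕ) ∈ m.divisors := Nat.mem_divisors.mpr ⟨Dvd.intro Q rfl, by omega⟩
        refine ⟨⟨hdvd, ?_⟩, by omega⟩
        rw [hm, Nat.mul_div_cancel_left _ (by norm_num : 0 < 2)]
        exact hmuQ
      · have hdvd : d ∈ m.divisors := Nat.mem_divisors.mpr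
          ⟨Dvd.dvd.mul_left (Finset.dvd_prod_of_mem _ hd) 2, by omega⟩
        exact ⟨⟨hdvd, hmup d hd⟩, hwin d hd⟩
  have hDpossmall : (m.divisors.filter (fun d => μ (m / d) = 1)).filter (· < K)
      = {1} := by
    ext d
    simp only [Finset.mem_filter, Finset.mem_singleton]
    constructor
    · rintro ⟨⟨hdvd, hmu⟩, hdK⟩
      have hd : d ∈ m.divisors.filter (· < K) := Finset.mem_filter.mpr ⟨hdvd, hdK⟩
      rw [hclass] at hd
      simp only [Finset.mem_insert] at hd
      rcases hd with rfl | rfl | hd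
      · rfl
      · rw [hm, Nat.mul_div_cancel_left _ (by norm_num : 0 < 2), hmuQ] at hmu
        exact absurd hmu (by norm_num)
      · rw [hmup d hd] at hmu; exact absurd hmu (by norm_num)
    · rintro rfl
      refine ⟨⟨Nat.mem_divisors.mpr ⟨one_dvd m, by omega⟩, ?_⟩, by omega⟩
      rw [Nat.div_one]; exact hmum
  -- final assembly
  set e : ℕ := P.card +
    ((m.divisors.filter (fun d => μ (m / d) = -1)).filter (fun d => ¬ d < K)).card + 1 with he
  set b : ℕ :=
    ((m.divisors.filter (fun d => μ (m / d) = 1)).filter (fun d => ¬ d < K)).card with hb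
  have hiden := cyclotomic_mul_prod_eq (m := m) (by omega) hmsf
  set A1 : ℤ[X] := (1 - X ^ 2) * (1 - Sp) with hA1def
  have hA3 : MEq K (∏ d ∈ m.divisors.filter (fun d => μ (m / d) = -1), ((X : ℤ[X]) ^ d - 1))
      (A1 * (-1) ^ e) := by
    refine (prod_X_pow_sub_one_reduce K _).trans ?_
    rw [hDnegsmall, Finset.prod_insert h2notP]
    refine (((MEq.refl ((X : ℤ[X]) ^ 2 - 1)).mul
      (hprodS P (Finset.Subset.refl P))).mul (MEq.refl _)).trans ?_
    exact MEq.of_eq (by rw [hA1def, he, hSp]; ring)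
  have hBred : MEq K (∏ d ∈ m.divisors.filter (fun d => μ (m / d) = 1), ((X : ℤ[X]) ^ d - 1))
      (((X : ℤ[X]) - 1) * (-1) ^ b) := by
    refine (prod_X_pow_sub_one_reduce K _).trans ?_
    rw [hDpossmall, Finset.prod_singleton, pow_one]
    exact MEq.refl _
  have hfull : MEq K (cyclotomic m ℤ * (A1 * (-1) ^ e)) (((X : ℤ[X]) - 1) * (-1) ^ b) :=
    (((MEq.refl (cyclotomic m ℤ)).mul hA3).symm.trans (MEq.of_eq hiden)).trans hBred
  have hee : ((-1 : ℤ[X]) ^ e) * ((-1) ^ e) = 1 := by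
    rw [← pow_add, ← two_mul, pow_mul, neg_one_sq, one_pow]
  have h8 : MEq K (cyclotomic m ℤ * A1) (((X : ℤ[X]) - 1) * (-1) ^ (b + e)) := by
    have h7 := hfull.mul (MEq.refl ((-1 : ℤ[X]) ^ e))
    refine (MEq.of_eq ?_).trans (h7.trans (MEq.of_eq (by ring)))
    calc cyclotomic m ℤ * A1
        = cyclotomic m ℤ * (A1 * ((-1) ^ e * (-1) ^ e)) := by rw [hee, mul_one]
      _ = cyclotomic m ℤ * (A1 * (-1) ^ e) * (-1) ^ e := by ring
  have hA10 : A1.coeff 0 = 1 := by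
    rw [hA1def, mul_coeff_zero, coeff_sub, coeff_sub, coeff_one, coeff_X_pow, hSp,
      coeff_sum_X_pow, if_pos rfl, if_neg (by norm_num : ¬ (0 = 2)),
      if_neg (fun h => by have := h3 0 h; omega)]
    norm_num
  have hK0 : 0 < K := by omega
  have hwodd : Odd (b + e) := by
    by_contra hcon
    rw [Nat.not_odd_iff_even] at hcon
    have h0 := h8 0 hK0
    rw [Even.neg_one_pow hcon, mul_one, mul_coeff_zero,
      Polynomial.cyclotomic_coeff_zero ℤ hm1, hA10, coeff_sub, coeff_X_zero, coeff_one] at h0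
    norm_num at h0
  have h9 : MEq K (cyclotomic m ℤ * A1) (1 - X) := by
    refine h8.trans (MEq.of_eq ?_)
    rw [Odd.neg_one_pow hwodd]
    ring
  have hGA : MEq K (G * A1) (1 - X) := by
    have e2 : G * A1 = ((1 + X) * G) * ((1 - X) * (1 - Sp)) := by rw [hA1def]; ring
    refine (MEq.of_eq e2).trans ((hstep.mul (MEq.refl _)).trans ?_)
    have e3 : (1 + Sp) * ((1 - X) * (1 - Sp)) = (1 - X) * (1 - Sp * Sp) := by ring
    refine (MEq.of_eq e3).trans ?_
    exact (((MEq.refl ((1 : ℤ[X]) - X)).mul ((MEq.refl 1).sub hSS))).trans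
      (MEq.of_eq (by ring))
  have hfinal : MEq K (cyclotomic m ℤ) G := MEq.cancel hA10 (h9.trans hGA.symm)
  rw [hfinal j hj, hGcoeff j hj]


theorem cyclotomic_coeff_even_index_surjective :
    {z : ℤ | ∃ n k : ℕ, 0 < n ∧ (Polynomial.cyclotomic (2 * n) ℤ).coeff k = z} = Set.univ := by
  ext z
  simp only [Set.mem_setOf_eq, Set.mem_univ, iff_true]
  obtain ⟨N, hN2, hNcard⟩ := primes_window (2 * z.natAbs + 3)
  obtain ⟨P, hPsub, hPcard⟩ := Finset.exists_subset_card_eq hNcard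
  have hP : ∀ p ∈ P, Nat.Prime p := fun p hp => (Finset.mem_filter.mp (hPsub hp)).2
  have hIoo : ∀ p ∈ P, N < p ∧ p < 2 * N := fun p hp =>
    Finset.mem_Ioo.mp (Finset.mem_filter.mp (hPsub hp)).1
  have h3 : ∀ p ∈ P, 3 ≤ p := fun p hp => by have := (hIoo p hp).1; omega
  have hne : P.Nonempty := Finset.card_pos.mp (by omega)
  have hmin : N < P.min' hne := (hIoo _ (P.min'_mem hne)).1
  have hwin : ∀ p ∈ P, p < 2 * P.min' hne := fun p hp => by
    have := (hIoo p hp).2; omega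
  have hodd : Odd P.card := by rw [hPcard]; exact ⟨z.natAbs + 1, by ring⟩
  have hlt : z.natAbs < 2 * z.natAbs + 3 := by omega
  set iso := P.orderIsoOfFin hPcard with hiso
  set q : ℕ := (iso ⟨z.natAbs, hlt⟩ : ℕ) with hq
  have hqP : q ∈ P := (iso ⟨z.natAbs, hlt⟩).2
  have hcount : (P.filter (· ≤ q)).card = z.natAbs + 1 := by
    have himg : P.filter (· ≤ q) =
        (Finset.Iic (⟨z.natAbs, hlt⟩ : Fin (2 * z.natAbs + 3))).image
          (fun i => (iso i : ℕ)) := by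
      ext p
      simp only [Finset.mem_filter, Finset.mem_image, Finset.mem_Iic]
      constructor
      · rintro ⟨hpP, hple⟩
        refine ⟨iso.symm ⟨p, hpP⟩, ?_, by simp⟩
        rw [← iso.le_iff_le, OrderIso.apply_symm_apply]
        exact Subtype.mk_le_mk.mpr hple
      · rintro ⟨i, hi, rfl⟩
        refine ⟨(iso i).2, ?_⟩
        rw [hq]
        exact Subtype.coe_le_coe.mpr (iso.le_iff_le.mpr hi)
    rw [himg, Finset.card_image_of_injective _
      (fun a b hab => iso.injective (Subtype.coe_injective hab)), Fin.card_Iic]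
  have hoddq : Odd q := (hP q hqP).odd_of_ne_two (by have := h3 q hqP; omega)
  have hqK : q + 1 < 2 * P.min' hne := by
    have h1 := (hIoo q hqP).2
    omega
  have hform := main_coeff_formula P hne hP h3 hodd hwin
  have hQpos : 0 < ∏ p ∈ P, p := Finset.prod_pos fun p hp => (hP p hp).pos
  rcases lt_or_ge 0 z with hz | hz
  · -- z > 0 : take j = q (odd)
    refine ⟨∏ p ∈ P, p, q, hQpos, ?_⟩
    rw [hform q (by omega), hcount, Odd.neg_one_pow hoddq]
    push_cast
    rw [abs_of_pos hz]
    ring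
  · -- z ≤ 0 : take j = q + 1 (even)
    refine ⟨∏ p ∈ P, p, q + 1, hQpos, ?_⟩
    have hq1notP : q + 1 ∉ P := by
      intro hmem
      have hodd' : Odd (q + 1) := (hP _ hmem).odd_of_ne_two (by have := h3 _ hmem; omega)
      rcases hoddq with ⟨a, ha⟩
      rcases hodd' with ⟨b, hb⟩
      omega
    have hfilter : P.filter (· ≤ q + 1) = P.filter (· ≤ q) := by
      ext p
      simp only [Finset.mem_filter]
      constructor
      · rintro ⟨hp, hle⟩
        refine ⟨hp, ?_⟩
        rcases eq_or_ne p (q + 1) with rfl | hne'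
        · exact absurd hp hq1notP
        · omega
      · rintro ⟨hp, hle⟩
        exact ⟨hp, by omega⟩
    rw [hform (q + 1) hqK, hfilter, hcount, Even.neg_one_pow hoddq.add_one]
    push_cast
    rw [abs_of_nonpos hz]
    ring
end

section
/- For every k ≥ 13 there exist consecutive odd primes p₁ < p₂ < p₃ with p₃ ≤ k < p₁ + p₂. -/
open Real

/-- Variant of `Bertrand.real_main_inequality` with an extra `x ^ 3` of room,
valid from `2048` on. -/
theorem cpi_real_main_inequality {x : ℝ} (x_large : (2048 : ℝ) ≤ x) :
    x ^ 4 * (2 * x) ^ √(2 * x) * 4 ^ (2 * x / 3) ≤ 4 ^ x := by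
  let f : ℝ → ℝ := fun x => 4 * log x + √(2 * x) * log (2 * x) - log 4 / 3 * x
  have hf' : ∀ x, 0 < x → 0 < x ^ 4 * (2 * x) ^ √(2 * x) / 4 ^ (x / 3) := fun x h =>
    div_pos (mul_pos (pow_pos h 4) (rpow_pos_of_pos (mul_pos two_pos h) _))
      (rpow_pos_of_pos four_pos _)
  have hf : ∀ x, 0 < x → f x = log (x ^ 4 * (2 * x) ^ √(2 * x) / 4 ^ (x / 3)) := by
    intro x h5
    have h6 := mul_pos (zero_lt_two' ℝ) h5
    have h7 := rpow_pos_of_pos h6 (√(2 * x))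
    rw [log_div (mul_pos (pow_pos h5 4) h7).ne' (rpow_pos_of_pos four_pos _).ne',
      log_mul (pow_pos h5 4).ne' h7.ne', log_pow,
      log_rpow h6, log_rpow zero_lt_four, ← mul_div_right_comm, ← mul_div, mul_comm x]
    push_cast
    ring
  have h5 : 0 < x := lt_of_lt_of_le (by norm_num1) x_large
  rw [← div_le_one (rpow_pos_of_pos four_pos x), ← div_div_eq_mul_div, ← rpow_sub four_pos, ←
    mul_div 2 x, mul_div_left_comm, ← mul_one_sub, (by norm_num1 : (1 : ℝ) - 2 / 3 = 1 / 3),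
    mul_one_div, ← log_nonpos_iff (hf' x h5).le, ← hf x h5]
  have h : ConcaveOn ℝ (Set.Ioi 0.5) f := by
    apply ConcaveOn.sub
    · apply ConcaveOn.add
      · have hlog : ConcaveOn ℝ (Set.Ioi 0.5) log := strictConcaveOn_log_Ioi.concaveOn.subset
          (Set.Ioi_subset_Ioi (by norm_num)) (convex_Ioi 0.5)
        have h4 : ((4:ℝ) • log) = (fun x => 4 * log x) := by
          funext y; simp [smul_eq_mul]
        exact h4 ▸ hlog.smul (by norm_num : (0:ℝ) ≤ 4)
      convert ((strictConcaveOn_sqrt_mul_log_Ioi.concaveOn.comp_linearMap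
        ((2 : ℝ) • LinearMap.id))) using 1
      · rfl
      · rfl
      ext x
      simp only [Set.mem_Ioi, Set.mem_preimage, LinearMap.smul_apply,
        LinearMap.id_coe, id_eq, smul_eq_mul]
      rw [← mul_lt_mul_iff_right₀ (two_pos)]
      norm_num1
      rfl
      rfl
    apply ConvexOn.smul
    · refine div_nonneg (log_nonneg (by norm_num1)) (by norm_num1)
    · exact convexOn_id (convex_Ioi (0.5 : ℝ))
  suffices ∃ x1 x2, 0.5 < x1 ∧ x1 < x2 ∧ x2 ≤ x ∧ 0 ≤ f x1 ∧ f x2 ≤ 0 by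
    obtain ⟨x1, x2, h1, h2, h0, h3, h4⟩ := this
    exact (h.right_le_of_le_left'' h1 ((h1.trans h2).trans_le h0) h2 h0 (h4.trans h3)).trans h4
  refine ⟨18, 2048, by norm_num1, by norm_num1, x_large, ?_, ?_⟩
  · have : √(2 * 18 : ℝ) = 6 := (sqrt_eq_iff_mul_self_eq_of_pos (by norm_num1)).mpr (by norm_num1)
    rw [hf _ (by norm_num1), log_nonneg_iff (by positivity), this, one_le_div (by norm_num1)]
    norm_num1
  · have : √(2 * 2048 : ℝ) = 64 :=
      (sqrt_eq_iff_mul_self_eq_of_pos (by norm_num1)).mpr (by norm_num1)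
    rw [hf _ (by norm_num1), log_nonpos_iff (hf' _ (by norm_num1)).le, this,
        div_le_one (by positivity)]
    conv in (2048:ℝ) ^ 4 => equals (2:ℝ) ^ 44 => norm_num1
    conv in 2 * 2048 => equals 2 ^ 12 => norm_num1
    conv in 64 => rw [← Nat.cast_ofNat]
    rw [rpow_natCast, ← pow_mul, ← pow_add]
    conv in 4 => equals 2 ^ (2 : ℝ) => rw [rpow_two]; norm_num1
    rw [← rpow_mul, ← rpow_natCast]
    on_goal 1 => apply rpow_le_rpow_of_exponent_le
    all_goals norm_num1

/-- Nat version of the main inequality. -/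
theorem cpi_main_inequality {n : ℕ} (n_large : 2048 ≤ n) :
    n ^ 4 * (2 * n) ^ Nat.sqrt (2 * n) * 4 ^ (2 * n / 3) ≤ 4 ^ n := by
  rw [← @Nat.cast_le ℝ]
  push_cast
  rw [← Real.rpow_natCast ((2:ℝ) * n) (Nat.sqrt (2 * n)), ← Real.rpow_natCast 4 (2 * n / 3),
    ← Real.rpow_natCast 4 n]
  refine le_trans ?_ (cpi_real_main_inequality (by exact_mod_cast n_large))
  gcongr
  · have : (1:ℝ) ≤ 2 * (n:ℝ) := by
      have : (2048:ℝ) ≤ (n:ℝ) := by exact_mod_cast n_large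
      nlinarith
    linarith
  · exact_mod_cast Real.nat_sqrt_le_real_sqrt
  · norm_num1
  · exact Nat.cast_div_le.trans (by norm_cast)

/-- The part of the factorization of the central binomial coefficient coming from
small primes, bounded as in the Erdős proof of Bertrand's postulate. -/
theorem cpi_prod_small_le (n : ℕ) (n_large : 2 < n) :
    (∏ i ∈ Finset.range (2 * n / 3 + 1), i ^ (Nat.centralBinom n).factorization i) ≤
      (2 * n) ^ Nat.sqrt (2 * n) * 4 ^ (2 * n / 3) := by
  have n_pos : 0 < n := by omega
  have n2_pos : 1 ≤ 2 * n := by omega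
  let S := (Finset.range (2 * n / 3 + 1)).filter Nat.Prime
  let f := fun (x : ℕ) => x ^ (Nat.centralBinom n).factorization x
  have hSf : ∏ x ∈ S, f x = ∏ x ∈ Finset.range (2 * n / 3 + 1), f x := by
    refine Finset.prod_filter_of_ne fun p _ h => ?_
    contrapose! h; dsimp only [f]
    rw [Nat.factorization_eq_zero_of_not_prime n.centralBinom h, pow_zero]
  rw [show (∏ i ∈ Finset.range (2 * n / 3 + 1), i ^ (Nat.centralBinom n).factorization i)
      = ∏ x ∈ Finset.range (2 * n / 3 + 1), f x from rfl, ← hSf,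
    ← Finset.prod_filter_mul_prod_filter_not S (· ≤ Nat.sqrt (2 * n))]
  apply mul_le_mul'
  · refine (Finset.prod_le_prod' fun p _ => (?_ : f p ≤ 2 * n)).trans ?_
    · exact Nat.pow_factorization_choose_le (mul_pos two_pos n_pos)
    have : (Finset.Icc 1 (Nat.sqrt (2 * n))).card = Nat.sqrt (2 * n) := by
      rw [Nat.card_Icc, Nat.add_sub_cancel]
    rw [Finset.prod_const]
    refine pow_right_mono₀ n2_pos ((Finset.card_le_card fun x hx => ?_).trans this.le)
    obtain ⟨h1, h2⟩ := Finset.mem_filter.1 hx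
    exact Finset.mem_Icc.mpr ⟨(Finset.mem_filter.1 h1).2.one_lt.le, h2⟩
  · refine le_trans ?_ (primorial_le_4_pow (2 * n / 3))
    refine (Finset.prod_le_prod' fun p hp => (?_ : f p ≤ p)).trans ?_
    · obtain ⟨h1, h2⟩ := Finset.mem_filter.1 hp
      refine (pow_right_mono₀ (Finset.mem_filter.1 h1).2.one_lt.le ?_).trans (pow_one p).le
      exact Nat.factorization_choose_le_one (Nat.sqrt_lt'.mp <| not_le.1 h2)
    refine Finset.prod_le_prod_of_subset_of_one_le' (Finset.filter_subset _ _) ?_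
    exact fun p hp _ => (Finset.mem_filter.1 hp).2.one_lt.le

theorem cpi_order3 {P : ℕ → Prop} {a b c : ℕ} (hab : a ≠ b) (hac : a ≠ c) (hbc : b ≠ c)
    (ha : P a) (hb : P b) (hc : P c) :
    ∃ x y z, P x ∧ P y ∧ P z ∧ x < y ∧ y < z := by
  rcases lt_trichotomy a b with h1 | h1 | h1
  · rcases lt_trichotomy b c with h2 | h2 | h2
    · exact ⟨a, b, c, ha, hb, hc, h1, h2⟩
    · exact absurd h2 hbc
    · rcases lt_trichotomy a c with h3 | h3 | h3
      · exact ⟨a, c, b, ha, hc, hb, h3, h2⟩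
      · exact absurd h3 hac
      · exact ⟨c, a, b, hc, ha, hb, h3, h1⟩
  · exact absurd h1 hab
  · rcases lt_trichotomy a c with h2 | h2 | h2
    · exact ⟨b, a, c, hb, ha, hc, h1, h2⟩
    · exact absurd h2 hac
    · rcases lt_trichotomy b c with h3 | h3 | h3
      · exact ⟨b, c, a, hb, hc, ha, h3, h2⟩
      · exact absurd h3 hbc
      · exact ⟨c, b, a, hc, hb, ha, h3, h1⟩

/-- If there are at most two primes in `(n, 2n]`, then the part of the factorization of the
central binomial coefficient coming from large primes is at most `(2n)^2`. -/
theorem cpi_prod_large_le (n : ℕ) (n_large : 2048 ≤ n)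
    (no3 : ¬∃ a b c : ℕ, a.Prime ∧ b.Prime ∧ c.Prime ∧ n < a ∧ a < b ∧ b < c ∧ c ≤ 2 * n) :
    (∏ i ∈ Finset.Ico (2 * n / 3 + 1) (2 * n + 1), i ^ (Nat.centralBinom n).factorization i) ≤
      (2 * n) ^ 2 := by
  classical
  set T := Finset.Ico (2 * n / 3 + 1) (2 * n + 1) with hT
  set C := T.filter (fun p => p.Prime ∧ n < p) with hC
  have hcard : C.card ≤ 2 := by
    by_contra hlt
    push_neg at hlt
    obtain ⟨t, hts, ht3⟩ := Finset.exists_subset_card_eq (show 3 ≤ C.card by omega)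
    rw [Finset.card_eq_three] at ht3
    obtain ⟨a, b, c, hab, hac, hbc, rfl⟩ := ht3
    have hmem : ∀ x ∈ ({a, b, c} : Finset ℕ), x.Prime ∧ n < x ∧ x ≤ 2 * n := by
      intro x hx
      have hxC := hts hx
      rw [hC, Finset.mem_filter] at hxC
      have hxT := hxC.1
      rw [hT, Finset.mem_Ico] at hxT
      exact ⟨hxC.2.1, hxC.2.2, by omega⟩
    obtain ⟨x, y, z, hx, hy, hz, hxy, hyz⟩ :=
      cpi_order3 (P := fun x => x.Prime ∧ n < x ∧ x ≤ 2 * n) hab hac hbc (hmem a (by simp)) (hmem b (by simp)) (hmem c (by simp))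
    exact no3 ⟨x, y, z, hx.1, hy.1, hz.1, hx.2.1, hxy, hyz, hz.2.2⟩
  calc (∏ i ∈ T, i ^ (Nat.centralBinom n).factorization i)
      = (∏ i ∈ C, i ^ (Nat.centralBinom n).factorization i) *
        ∏ i ∈ T.filter (fun p => ¬(p.Prime ∧ n < p)), i ^ (Nat.centralBinom n).factorization i :=
        (Finset.prod_filter_mul_prod_filter_not T _ _).symm
    _ ≤ (∏ _i ∈ C, 2 * n) * ∏ _i ∈ T.filter (fun p => ¬(p.Prime ∧ n < p)), 1 := by
        apply mul_le_mul'
        · refine Finset.prod_le_prod' fun i hi => ?_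
          rw [hC, Finset.mem_filter] at hi
          obtain ⟨hiT, hip, hin⟩ := hi
          rw [hT, Finset.mem_Ico] at hiT
          have hnu : (Nat.centralBinom n).factorization i ≤ 1 := by
            apply Nat.factorization_choose_le_one
            nlinarith
          calc i ^ (Nat.centralBinom n).factorization i ≤ i ^ 1 :=
                Nat.pow_le_pow_right (by omega) hnu
            _ ≤ 2 * n := by rw [pow_one]; omega
        · refine Finset.prod_le_prod' fun i hi => ?_
          rw [Finset.mem_filter] at hi
          obtain ⟨hiT, hcond⟩ := hi
          rw [hT, Finset.mem_Ico] at hiT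
          by_cases hp : i.Prime
          · have hin : i ≤ n := by
              by_contra hin
              exact hcond ⟨hp, by omega⟩
            have h0 : (Nat.centralBinom n).factorization i = 0 :=
              Nat.factorization_centralBinom_of_two_mul_self_lt_three_mul
                (by omega) hin (by omega)
            simp [h0]
          · simp [Nat.factorization_eq_zero_of_not_prime _ hp]
    _ ≤ (2 * n) ^ 2 := by
        rw [Finset.prod_const, Finset.prod_const_one, mul_one]
        exact Nat.pow_le_pow_right (by omega) hcard

theorem cpi_centralBinom_le (n : ℕ) (n_large : 2048 ≤ n)
    (no3 : ¬∃ a b c : ℕ, a.Prime ∧ b.Prime ∧ c.Prime ∧ n < a ∧ a < b ∧ b < c ∧ c ≤ 2 * n) :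
    Nat.centralBinom n ≤ (2 * n) ^ Nat.sqrt (2 * n) * 4 ^ (2 * n / 3) * (2 * n) ^ 2 := by
  calc Nat.centralBinom n
      = ∏ i ∈ Finset.range (2 * n + 1), i ^ (Nat.centralBinom n).factorization i :=
        (Nat.prod_pow_factorization_centralBinom n).symm
    _ = (∏ i ∈ Finset.range (2 * n / 3 + 1), i ^ (Nat.centralBinom n).factorization i) *
        ∏ i ∈ Finset.Ico (2 * n / 3 + 1) (2 * n + 1),
          i ^ (Nat.centralBinom n).factorization i :=
        (Finset.prod_range_mul_prod_Ico _ (by omega)).symm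
    _ ≤ ((2 * n) ^ Nat.sqrt (2 * n) * 4 ^ (2 * n / 3)) * (2 * n) ^ 2 :=
        mul_le_mul' (cpi_prod_small_le n (by omega)) (cpi_prod_large_le n n_large no3)

/-- For large `n` there are at least three primes in `(n, 2n]`. -/
theorem cpi_three_primes_eventually (n : ℕ) (n_large : 2048 ≤ n) :
    ∃ a b c : ℕ, a.Prime ∧ b.Prime ∧ c.Prime ∧ n < a ∧ a < b ∧ b < c ∧ c ≤ 2 * n := by
  by_contra no3
  have H1 : n ^ 4 * (2 * n) ^ Nat.sqrt (2 * n) * 4 ^ (2 * n / 3) ≤ 4 ^ n :=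
    cpi_main_inequality n_large
  have H2 : 4 ^ n < n * n.centralBinom :=
    Nat.four_pow_lt_mul_centralBinom n (by omega)
  have H3 := cpi_centralBinom_le n n_large no3
  have H4 : n * n.centralBinom ≤ n ^ 4 * (2 * n) ^ Nat.sqrt (2 * n) * 4 ^ (2 * n / 3) := by
    calc n * n.centralBinom
        ≤ n * ((2 * n) ^ Nat.sqrt (2 * n) * 4 ^ (2 * n / 3) * (2 * n) ^ 2) :=
          Nat.mul_le_mul_left n H3
      _ = (n * (2 * n) ^ 2) * ((2 * n) ^ Nat.sqrt (2 * n) * 4 ^ (2 * n / 3)) := by ring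
      _ ≤ n ^ 4 * ((2 * n) ^ Nat.sqrt (2 * n) * 4 ^ (2 * n / 3)) := by
          apply Nat.mul_le_mul_right
          calc n * (2 * n) ^ 2 = 4 * n ^ 3 := by ring
            _ ≤ n * n ^ 3 := Nat.mul_le_mul_right _ (by omega)
            _ = n ^ 4 := by ring
      _ = n ^ 4 * (2 * n) ^ Nat.sqrt (2 * n) * 4 ^ (2 * n / 3) := by ring
  omega

theorem cpi_step (a b c d : ℕ) {n : ℕ} (hb : b.Prime) (hc : c.Prime) (hd : d.Prime)
    (hbc : b < c) (hcd : c < d) (cov : d ≤ 2 * a)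
    (H : n < a → ∃ p q r : ℕ, p.Prime ∧ q.Prime ∧ r.Prime ∧ n < p ∧ p < q ∧ q < r ∧ r ≤ 2 * n)
    (hn : n < b) :
    ∃ p q r : ℕ, p.Prime ∧ q.Prime ∧ r.Prime ∧ n < p ∧ p < q ∧ q < r ∧ r ≤ 2 * n := by
  by_cases h : a ≤ n
  · exact ⟨b, c, d, hb, hc, hd, hn, hbc, hcd, by omega⟩
  · exact H (by omega)

/-- For every `n ≥ 9` there are at least three primes in `(n, 2n]`. -/
theorem cpi_three_primes (n : ℕ) (hn : 9 ≤ n) :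
    ∃ p q r : ℕ, p.Prime ∧ q.Prime ∧ r.Prime ∧ n < p ∧ p < q ∧ q < r ∧ r ≤ 2 * n := by
  rcases lt_or_ge n 2053 with h | h
  · revert h
    refine cpi_step 1039 2053 2063 2069 (by norm_num) (by norm_num) (by norm_num)
      (by norm_num) (by norm_num) (by norm_num) ?_
    refine cpi_step 541 1039 1049 1051 (by norm_num) (by norm_num) (by norm_num)
      (by norm_num) (by norm_num) (by norm_num) ?_
    refine cpi_step 281 541 547 557 (by norm_num) (by norm_num) (by norm_num)
      (by norm_num) (by norm_num) (by norm_num) ?_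
    refine cpi_step 149 281 283 293 (by norm_num) (by norm_num) (by norm_num)
      (by norm_num) (by norm_num) (by norm_num) ?_
    refine cpi_step 79 149 151 157 (by norm_num) (by norm_num) (by norm_num)
      (by norm_num) (by norm_num) (by norm_num) ?_
    refine cpi_step 47 79 83 89 (by norm_num) (by norm_num) (by norm_num)
      (by norm_num) (by norm_num) (by norm_num) ?_
    refine cpi_step 31 47 53 59 (by norm_num) (by norm_num) (by norm_num)
      (by norm_num) (by norm_num) (by norm_num) ?_
    refine cpi_step 23 31 37 41 (by norm_num) (by norm_num) (by norm_num)
      (by norm_num) (by norm_num) (by norm_num) ?_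
    refine cpi_step 17 23 29 31 (by norm_num) (by norm_num) (by norm_num)
      (by norm_num) (by norm_num) (by norm_num) ?_
    refine cpi_step 13 17 19 23 (by norm_num) (by norm_num) (by norm_num)
      (by norm_num) (by norm_num) (by norm_num) ?_
    refine cpi_step 11 13 17 19 (by norm_num) (by norm_num) (by norm_num)
      (by norm_num) (by norm_num) (by norm_num) ?_
    intro _
    exact ⟨11, 13, 17, by norm_num, by norm_num, by norm_num, by omega, by norm_num,
      by norm_num, by omega⟩
  · exact cpi_three_primes_eventually n (by omega)

/-- Existence of a largest prime below a bound `m ≥ 3`. -/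
theorem cpi_largest_prime_lt (m : ℕ) (hm : 3 ≤ m) :
    ∃ p, p.Prime ∧ p < m ∧ ∀ q, q.Prime → q < m → q ≤ p := by
  classical
  have hne : ((Finset.range m).filter Nat.Prime).Nonempty :=
    ⟨2, Finset.mem_filter.2 ⟨Finset.mem_range.2 (by omega), Nat.prime_two⟩⟩
  set S := (Finset.range m).filter Nat.Prime
  refine ⟨S.max' hne, ?_, ?_, ?_⟩
  · exact (Finset.mem_filter.1 (S.max'_mem hne)).2
  · exact Finset.mem_range.1 (Finset.mem_filter.1 (S.max'_mem hne)).1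
  · intro q hq hqm
    exact S.le_max' q (Finset.mem_filter.2 ⟨Finset.mem_range.2 hqm, hq⟩)

theorem consecutive_primes_interval (k : ℕ) (hk : 13 ≤ k) :
    ∃ p₁ p₂ p₃ : ℕ, p₁.Prime ∧ p₂.Prime ∧ p₃.Prime ∧
      Odd p₁ ∧ p₁ < p₂ ∧ p₂ < p₃ ∧
      (∀ q : ℕ, q.Prime → p₁ < q → p₂ ≤ q) ∧
      (∀ q : ℕ, q.Prime → p₂ < q → p₃ ≤ q) ∧
      p₃ ≤ k ∧ k < p₁ + p₂ := by
  obtain ⟨p₃, hp₃, hp₃k, hmax₃⟩ := cpi_largest_prime_lt (k + 1) (by omega)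
  have h13 : 13 ≤ p₃ := hmax₃ 13 (by norm_num) (by omega)
  obtain ⟨p₂, hp₂, hp₂lt, hmax₂⟩ := cpi_largest_prime_lt p₃ (by omega)
  have h11 : 11 ≤ p₂ := hmax₂ 11 (by norm_num) (by omega)
  obtain ⟨p₁, hp₁, hp₁lt, hmax₁⟩ := cpi_largest_prime_lt p₂ (by omega)
  have h7 : 7 ≤ p₁ := hmax₁ 7 (by norm_num) (by omega)
  have hodd : Odd p₁ := hp₁.odd_of_ne_two (by omega)
  have hcons₁ : ∀ q : ℕ, q.Prime → p₁ < q → p₂ ≤ q := by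
    intro q hq hlt
    by_contra hqlt
    push_neg at hqlt
    have := hmax₁ q hq hqlt
    omega
  have hcons₂ : ∀ q : ℕ, q.Prime → p₂ < q → p₃ ≤ q := by
    intro q hq hlt
    by_contra hqlt
    push_neg at hqlt
    have := hmax₂ q hq hqlt
    omega
  refine ⟨p₁, p₂, p₃, hp₁, hp₂, hp₃, hodd, hp₁lt, hp₂lt, hcons₁, hcons₂, by omega, ?_⟩
  by_contra hc
  push_neg at hc
  -- now p₁ + p₂ ≤ k
  rcases eq_or_lt_of_le h7 with h7e | h7lt
  · -- p₁ = 7, hence p₂ = 11, p₃ = 13, but then 17 ≤ k gives a contradiction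
    have hp2e : p₂ = 11 := by
      by_contra hne
      have := hmax₁ 11 (by norm_num) (by omega)
      omega
    have hp3e : p₃ = 13 := by
      by_contra hne
      have h12 : p₃ ≠ 12 := by
        intro h; rw [h] at hp₃; norm_num at hp₃
      have := hmax₂ 13 (by norm_num) (by omega)
      omega
    have := hmax₃ 17 (by norm_num) (by omega)
    omega
  · -- p₁ ≥ 9
    have h9 : 9 ≤ p₁ := by
      obtain ⟨t, ht⟩ := hodd
      omega
    obtain ⟨a, b, c, ha, hb, hc, h1a, hab, hbc, hc2⟩ := cpi_three_primes p₁ h9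
    have hp2a : p₂ ≤ a := hcons₁ a ha h1a
    have hp3b : p₃ ≤ b := hcons₂ b hb (by omega)
    have hck : c ≤ k := by omega
    have := hmax₃ c hc (by omega)
    omega
end

section
/- Let p be an odd prime, t = φ(p-1), let g₁,...,g_t be the distinct primitive roots modulo p, and let S_k(p) = Σ_{i=1}^{t} g_i^k. Then S_k(p) ≡ μ((p-1)/gcd(p-1,k)) · φ(p-1)/φ((p-1)/gcd(p-1,k)) (mod p). -/
open ArithmeticFunction Finset
open scoped ArithmeticFunction.Moebius

lemma gcd_mul_of_coprime {m n : ℕ} (k : ℕ) (h : Nat.Coprime m n) :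
    Nat.gcd (m * n) k = Nat.gcd m k * Nat.gcd n k := by
  apply Nat.dvd_antisymm
  · have hg : Nat.gcd (m*n) k ∣ m * n := Nat.gcd_dvd_left _ _
    have := (Nat.gcd_mul_gcd_eq_iff_dvd_mul_of_coprime (x := Nat.gcd (m*n) k) h).mpr hg
    calc Nat.gcd (m*n) k = Nat.gcd (Nat.gcd (m*n) k) m * Nat.gcd (Nat.gcd (m*n) k) n := this.symm
    _ ∣ Nat.gcd m k * Nat.gcd n k := by
        apply Nat.mul_dvd_mul <;>
        exact Nat.dvd_gcd (Nat.gcd_dvd_right _ _) ((Nat.gcd_dvd_left _ _).trans (Nat.gcd_dvd_right _ _))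
  · refine Nat.Coprime.mul_dvd_of_dvd_of_dvd ?_ ?_ ?_
    · exact Nat.Coprime.coprime_dvd_left (Nat.gcd_dvd_left _ _)
        (Nat.Coprime.coprime_dvd_right (Nat.gcd_dvd_left _ _) h)
    · exact Nat.dvd_gcd ((Nat.gcd_dvd_left _ _).trans (Dvd.intro n rfl)) (Nat.gcd_dvd_right _ _)
    · exact Nat.dvd_gcd ((Nat.gcd_dvd_left _ _).trans (Dvd.intro_left m rfl)) (Nat.gcd_dvd_right _ _)

section
variable (k : ℕ)

private def tfun : ArithmeticFunction ℤ :=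
  ⟨fun d => if d ∣ k then (d : ℤ) else 0, by simp⟩

private def Rfun : ArithmeticFunction ℤ :=
  ⟨fun m => μ (m / m.gcd k) * ((m.totient / (m / m.gcd k).totient : ℕ) : ℤ), by simp⟩

lemma tfun_apply (d : ℕ) : tfun k d = if d ∣ k then (d : ℤ) else 0 := rfl
lemma Rfun_apply (m : ℕ) :
    Rfun k m = μ (m / m.gcd k) * ((m.totient / (m / m.gcd k).totient : ℕ) : ℤ) := rfl

lemma tfun_mult (hk : 0 < k) : (tfun k).IsMultiplicative := by
  constructor
  · simp [tfun_apply]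
  · intro m n h
    by_cases hm : m ∣ k <;> by_cases hn : n ∣ k
    · have : m * n ∣ k := Nat.Coprime.mul_dvd_of_dvd_of_dvd h hm hn
      simp [tfun_apply, hm, hn, this]
    · have : ¬ (m * n ∣ k) := fun hc => hn ((Dvd.intro_left m rfl).trans hc)
      simp [tfun_apply, hm, hn, this]
    · have : ¬ (m * n ∣ k) := fun hc => hm ((Dvd.intro n rfl).trans hc)
      simp [tfun_apply, hm, hn, this]
    · have : ¬ (m * n ∣ k) := fun hc => hm ((Dvd.intro n rfl).trans hc)
      simp [tfun_apply, hm, hn, this]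

lemma Rfun_mult (hk : 0 < k) : (Rfun k).IsMultiplicative := by
  constructor
  · simp [Rfun_apply]
  · intro m n h
    rcases Nat.eq_zero_or_pos m with rfl | hm
    · have hn1 : n = 1 := Nat.coprime_zero_left n |>.mp h
      subst hn1; simp [Rfun_apply]
    rcases Nat.eq_zero_or_pos n with rfl | hn
    · have hm1 : m = 1 := Nat.coprime_zero_right m |>.mp h
      subst hm1; simp [Rfun_apply]
    have hgcd : (m * n).gcd k = m.gcd k * n.gcd k := gcd_mul_of_coprime k h
    have hdiv : m * n / (m.gcd k * n.gcd k) = (m / m.gcd k) * (n / n.gcd k) :=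
      (Nat.div_mul_div_comm (Nat.gcd_dvd_left m k) (Nat.gcd_dvd_left n k)).symm
    have hcop2 : Nat.Coprime (m / m.gcd k) (n / n.gcd k) :=
      Nat.Coprime.coprime_dvd_right (Nat.div_dvd_of_dvd (Nat.gcd_dvd_left n k))
        (Nat.Coprime.coprime_dvd_left (Nat.div_dvd_of_dvd (Nat.gcd_dvd_left m k)) h)
    have hmu : μ ((m / m.gcd k) * (n / n.gcd k)) = μ (m / m.gcd k) * μ (n / n.gcd k) :=
      isMultiplicative_moebius.map_mul_of_coprime hcop2
    have htot : (m * n).totient / ((m / m.gcd k) * (n / n.gcd k)).totient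
        = (m.totient / (m / m.gcd k).totient) * (n.totient / (n / n.gcd k).totient) := by
      rw [Nat.totient_mul h, Nat.totient_mul hcop2]
      exact (Nat.div_mul_div_comm
        (Nat.totient_dvd_of_dvd (Nat.div_dvd_of_dvd (Nat.gcd_dvd_left m k)))
        (Nat.totient_dvd_of_dvd (Nat.div_dvd_of_dvd (Nat.gcd_dvd_left n k)))).symm
    rw [Rfun_apply, Rfun_apply, Rfun_apply, hgcd, hdiv, hmu, htot]
    push_cast
    ring
end

section
variable (k : ℕ)

lemma Lfun_prime_pow {q : ℕ} (i : ℕ) (hq : q.Prime) (hi : 0 < i) :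
    (μ * tfun k) (q ^ i) = tfun k (q ^ i) - tfun k (q ^ (i - 1)) := by
  rw [ArithmeticFunction.mul_apply, Nat.sum_divisorsAntidiagonal (fun a b => μ a * tfun k b),
    Nat.divisors_prime_pow hq, Finset.sum_map]
  simp only [Function.Embedding.coeFn_mk]
  have hsub : Finset.range 2 ⊆ Finset.range (i + 1) := by
    apply Finset.range_subset_range.mpr; omega
  rw [← Finset.sum_subset hsub (fun j hj hj2 => by
    have hj1 : j ≠ 0 ∧ j ≠ 1 := by simp at hj2 ⊢; omega
    rw [moebius_apply_prime_pow hq hj1.1]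
    simp [hj1.2])]
  rw [Finset.sum_range_succ, Finset.sum_range_succ, Finset.sum_range_zero]
  rw [show q ^ i / q ^ 0 = q ^ i from by simp,
    show q ^ i / q ^ 1 = q ^ (i - 1) from by rw [pow_one]; exact Nat.pow_div hi hq.pos ▸ by rw [pow_one],
    pow_zero, pow_one, moebius_apply_one, moebius_apply_prime hq]
  ring

lemma L_eq_R (hk : 0 < k) : (μ * tfun k) = Rfun k := by
  rw [ArithmeticFunction.IsMultiplicative.eq_iff_eq_on_prime_powers _
    (isMultiplicative_moebius.mul (tfun_mult k hk)) _ (Rfun_mult k hk)]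
  intro q i hq
  rcases Nat.eq_zero_or_pos i with rfl | hi
  · rw [pow_zero]
    rw [(isMultiplicative_moebius.mul (tfun_mult k hk)).map_one, (Rfun_mult k hk).map_one]
  obtain ⟨j, rfl⟩ : ∃ j, i = j + 1 := ⟨i - 1, (Nat.succ_pred_eq_of_pos hi).symm⟩
  rw [Lfun_prime_pow k (j+1) hq hi, Nat.add_sub_cancel]
  have hq1 : 1 < q := hq.one_lt
  by_cases hA : q ^ (j+1) ∣ k
  · -- gcd = q^(j+1)
    have hgcd : (q ^ (j+1)).gcd k = q ^ (j+1) := Nat.gcd_eq_left hA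
    have hB : q ^ j ∣ k := (pow_dvd_pow q (Nat.le_succ j)).trans hA
    rw [Rfun_apply, hgcd, Nat.div_self (pow_pos hq.pos _), moebius_apply_one,
      tfun_apply, tfun_apply, if_pos hA, if_pos hB]
    rw [Nat.totient_one, Nat.div_one, Nat.totient_prime_pow hq (Nat.succ_pos j),
      Nat.succ_sub_one]
    push_cast [Nat.cast_sub hq.one_le]
    ring
  by_cases hB : q ^ j ∣ k
  · -- gcd = q^j
    have hgcd : (q ^ (j+1)).gcd k = q ^ j := by
      apply Nat.dvd_antisymm
      · obtain ⟨t, ht, hteq⟩ := (Nat.dvd_prime_pow hq).mp (Nat.gcd_dvd_left (q^(j+1)) k)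
        have htk : q ^ t ∣ k := hteq ▸ Nat.gcd_dvd_right _ _
        have : t ≠ j + 1 := fun h => hA (h ▸ htk)
        rw [hteq]
        exact pow_dvd_pow q (by omega)
      · exact Nat.dvd_gcd (pow_dvd_pow q (Nat.le_succ j)) hB
    rw [Rfun_apply, hgcd, Nat.pow_div (Nat.le_succ j) hq.pos, Nat.succ_sub (le_refl j),
      Nat.sub_self, pow_one, moebius_apply_prime hq,
      Nat.totient_prime_pow hq (Nat.succ_pos j), Nat.succ_sub_one, Nat.totient_prime hq,
      Nat.mul_div_cancel _ (by omega : 0 < q - 1),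
      tfun_apply, tfun_apply, if_neg hA, if_pos hB]
    push_cast
    ring
  · -- gcd = q^t with t ≤ j - 1, μ = 0
    have hA2 : ¬ q ^ (j+1) ∣ k := fun h => hB ((pow_dvd_pow q (Nat.le_succ j)).trans h)
    obtain ⟨t, ht, hteq⟩ := (Nat.dvd_prime_pow hq).mp (Nat.gcd_dvd_left (q^(j+1)) k)
    have htk : q ^ t ∣ k := hteq ▸ Nat.gcd_dvd_right _ _
    have htj : t < j := by
      by_contra hc
      exact hB ((pow_dvd_pow q (by omega)).trans htk)
    rw [Rfun_apply, hteq, Nat.pow_div (by omega) hq.pos,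
      moebius_apply_prime_pow hq (by omega), if_neg (by omega),
      tfun_apply, tfun_apply, if_neg hA2, if_neg hB]
    simp

lemma holder (m : ℕ) (hm : 0 < m) (hk : 0 < k) :
    ∑ d ∈ (m.gcd k).divisors, μ (m / d) * (d : ℤ)
      = μ (m / m.gcd k) * ((m.totient / (m / m.gcd k).totient : ℕ) : ℤ) := by
  have h1 : (μ * tfun k) m = Rfun k m := by rw [L_eq_R k hk]
  rw [ArithmeticFunction.mul_apply, Nat.sum_divisorsAntidiagonal' (fun a b => μ a * tfun k b)] at h1
  have h2 : ∑ d ∈ m.divisors, μ (m / d) * tfun k d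
      = ∑ d ∈ (m.gcd k).divisors, μ (m / d) * (d : ℤ) := by
    have hset : (m.gcd k).divisors = m.divisors.filter (· ∣ k) := by
      ext e
      simp only [Nat.mem_divisors, Nat.dvd_gcd_iff, Finset.mem_filter, ne_eq,
        (Nat.gcd_pos_of_pos_left k hm).ne', not_false_eq_true, and_true, hm.ne']
    rw [hset, Finset.sum_filter]
    apply Finset.sum_congr rfl
    intro d hd
    rw [tfun_apply]
    split <;> simp
  rw [← h2, h1, Rfun_apply]
end



lemma divisors_gcd_eq_s19 (m k : ℕ) (hm : 0 < m) :
    (m.gcd k).divisors = m.divisors.filter (· ∣ k) := by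
  ext e
  simp only [Nat.mem_divisors, Nat.dvd_gcd_iff, Finset.mem_filter, ne_eq,
    (Nat.gcd_pos_of_pos_left k hm).ne', not_false_eq_true, and_true, hm.ne']

lemma musum (d : ℕ) : (∑ e ∈ d.divisors, (μ e : ℤ)) = if d = 1 then 1 else 0 := by
  rw [← ArithmeticFunction.coe_mul_zeta_apply, moebius_mul_coe_zeta, ArithmeticFunction.one_apply]

theorem power_sum_primitive_roots_mod_p (p k : ℕ) (hp : p.Prime) (hodd : Odd p)
    (hk : 1 ≤ k) :
    (∑ g ∈ (Finset.Icc 1 (p - 1)).filter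
        (fun g : ℕ => orderOf ((g : ZMod p)) = p - 1), (g : ℤ) ^ k) ≡
      moebius ((p - 1) / Nat.gcd (p - 1) k) *
        (Nat.totient (p - 1) / Nat.totient ((p - 1) / Nat.gcd (p - 1) k) : ℕ)
      [ZMOD (p : ℤ)] := by
  haveI : Fact p.Prime := ⟨hp⟩
  have hp3 : 3 ≤ p := by
    have h2 := hp.two_le
    rcases hodd with ⟨t, ht⟩
    omega
  set m := p - 1 with hmdef
  have hm0 : 0 < m := by omega
  have hmlt : m < p := by omega
  rw [← ZMod.intCast_eq_intCast_iff, ← holder k m hm0 hk]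
  push_cast
  -- nonzero elements of order m
  have hx0 : ∀ x : ZMod p, orderOf x = m → x ≠ 0 := by
    intro x hx h0
    have h1 := pow_orderOf_eq_one x
    rw [hx, h0, zero_pow hm0.ne'] at h1
    exact zero_ne_one h1
  -- step 1 : sum over Icc = sum over ZMod elements of order m
  have step1 : ∑ g ∈ (Finset.Icc 1 (p - 1)).filter
        (fun g : ℕ => orderOf ((g : ZMod p)) = p - 1), ((g : ZMod p)) ^ k
      = ∑ x ∈ univ.filter (fun x : ZMod p => orderOf x = m), x ^ k := by
    apply Finset.sum_nbij' (fun g : ℕ => (g : ZMod p)) (fun x : ZMod p => x.val)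
    · intro a ha
      simp only [mem_filter, mem_univ, true_and]
      exact (mem_filter.mp ha).2
    · intro x hx
      have hord := (mem_filter.mp hx).2
      have hxne := hx0 x hord
      have hval : (x.val : ZMod p) = x := ZMod.natCast_rightInverse x
      rw [mem_filter, Finset.mem_Icc]
      have hlt := ZMod.val_lt x
      have hne : x.val ≠ 0 := fun h => hxne ((ZMod.val_eq_zero x).mp h)
      exact ⟨⟨by omega, by omega⟩, by rw [hval]; exact hord⟩
    · intro a ha
      have hmem := (mem_filter.mp ha).1
      rw [Finset.mem_Icc] at hmem
      exact ZMod.val_cast_of_lt (by omega)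
    · intro x hx
      exact ZMod.natCast_rightInverse x
    · intro a ha; rfl
  rw [step1]
  -- generator
  obtain ⟨u, hu⟩ := IsCyclic.exists_generator (α := (ZMod p)ˣ)
  have hordu : orderOf u = m := by
    rw [orderOf_eq_card_of_forall_mem_zpowers hu, Nat.card_eq_fintype_card,
      ZMod.card_units_eq_totient, Nat.totient_prime hp]
  set z := (u : ZMod p) with hz
  have hordz : orderOf z = m := by rw [hz, orderOf_units, hordu]
  have hordpow : ∀ j : ℕ, orderOf (z ^ j) = m / Nat.gcd m j := by
    intro j
    rw [hz, ← Units.val_pow_eq_pow_val, orderOf_units, orderOf_pow, hordu]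
  -- step 2 : reindex by powers of generator
  have step2 : ∑ j ∈ (range m).filter (fun j => Nat.gcd j m = 1), (z ^ j) ^ k
      = ∑ x ∈ univ.filter (fun x : ZMod p => orderOf x = m), x ^ k := by
    apply Finset.sum_nbij (fun j : ℕ => z ^ j)
    · intro j hj
      simp only [mem_filter, mem_range] at hj
      simp only [mem_filter, mem_univ, true_and, hordpow j, Nat.gcd_comm m j, hj.2, Nat.div_one]
    · intro j1 hj1 j2 hj2 h
      simp only [coe_filter, Set.mem_setOf_eq, mem_range] at hj1 hj2
      exact pow_injOn_Iio_orderOf (by simpa [hordz] using hj1.1) (by simpa [hordz] using hj2.1) h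
    · intro x hx
      simp only [coe_filter, Set.mem_setOf_eq, mem_univ, true_and] at hx
      have hxne := hx0 x hx
      obtain ⟨v, hv⟩ := isUnit_iff_ne_zero.mpr hxne
      obtain ⟨n, hn⟩ := mem_powers_iff_mem_zpowers.mpr (hu v)
      have hn' : u ^ n = v := hn
      refine ⟨n % m, ?_, ?_⟩
      · simp only [coe_filter, Set.mem_setOf_eq, mem_range]
        refine ⟨Nat.mod_lt _ hm0, ?_⟩
        have hord : orderOf (z ^ (n % m)) = m := by
          have : z ^ (n % m) = x := by
            rw [← hordz, pow_mod_orderOf, hz, ← Units.val_pow_eq_pow_val, hn', hv]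
          rw [this, hx]
        rw [hordpow] at hord
        have hdvd : Nat.gcd m (n % m) ∣ m := Nat.gcd_dvd_left _ _
        have := Nat.div_eq_self.mp hord
        rcases this with h | h
        · omega
        · rw [Nat.gcd_comm]; exact h
      · show z ^ (n % m) = x
        rw [← hordz, pow_mod_orderOf, hz, ← Units.val_pow_eq_pow_val, hn', hv]
    · intro j hj; rfl
  rw [← step2]
  -- step 3 : moebius indicator
  have musumC : ∀ d : ℕ, (∑ e ∈ d.divisors, (μ e : ZMod p)) = if d = 1 then 1 else 0 := by
    intro d
    have := musum d
    have h2 := congrArg (fun t : ℤ => (t : ZMod p)) this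
    push_cast at h2
    simpa using h2
  have step3 : ∑ j ∈ (range m).filter (fun j => Nat.gcd j m = 1), (z ^ j) ^ k
      = ∑ j ∈ range m, ∑ e ∈ m.divisors, (if e ∣ j then (μ e : ZMod p) * (z ^ j) ^ k else 0) := by
    rw [Finset.sum_filter]
    apply Finset.sum_congr rfl
    intro j hj
    have hgset : (Nat.gcd j m).divisors = m.divisors.filter (· ∣ j) := by
      ext e
      simp only [Nat.mem_divisors, Nat.dvd_gcd_iff, Finset.mem_filter, ne_eq,
        (Nat.gcd_pos_of_pos_right j hm0).ne', not_false_eq_true, and_true, hm0.ne']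
      tauto
    have : (if Nat.gcd j m = 1 then (z ^ j) ^ k else 0)
        = (∑ e ∈ (Nat.gcd j m).divisors, (μ e : ZMod p)) * (z ^ j) ^ k := by
      rw [musumC]
      split <;> simp
    rw [this, hgset, Finset.sum_filter, Finset.sum_mul]
    apply Finset.sum_congr rfl
    intro e he
    split <;> simp
  rw [step3, Finset.sum_comm]
  -- step 4/5 : inner geometric sums
  have step5 : ∀ e ∈ m.divisors,
      (∑ j ∈ range m, if e ∣ j then (μ e : ZMod p) * (z ^ j) ^ k else 0)
        = (μ e : ZMod p) * (if (m / e) ∣ k then ((m / e : ℕ) : ZMod p) else 0) := by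
    intro e he
    rw [Nat.mem_divisors] at he
    obtain ⟨hedvd, -⟩ := he
    have he0 : 0 < e := Nat.pos_of_dvd_of_pos hedvd hm0
    rw [← Finset.sum_filter, ← Finset.mul_sum]
    congr 1
    have hinner : ∑ j ∈ (range m).filter (fun j => e ∣ j), (z ^ j) ^ k
        = ∑ i ∈ range (m / e), (z ^ (e * k)) ^ i := by
      apply Finset.sum_nbij' (fun j : ℕ => j / e) (fun i : ℕ => e * i)
      · intro j hj
        simp only [mem_filter, mem_range] at hj
        rw [mem_range, Nat.lt_div_iff_mul_lt' hedvd, Nat.mul_div_cancel' hj.2]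
        exact hj.1
      · intro i hi
        rw [mem_range] at hi
        rw [mem_filter, mem_range]
        exact ⟨(Nat.lt_div_iff_mul_lt' hedvd i).mp hi, Dvd.intro i rfl⟩
      · intro j hj
        simp only [mem_filter, mem_range] at hj
        exact Nat.mul_div_cancel' hj.2
      · intro i hi
        exact Nat.mul_div_cancel_left i he0
      · intro j hj
        simp only [mem_filter, mem_range] at hj
        obtain ⟨i, rfl⟩ := hj.2
        rw [Nat.mul_div_cancel_left i he0, ← pow_mul, ← pow_mul, mul_right_comm]
    rw [hinner]
    have hdvd_iff : z ^ (e * k) = 1 ↔ (m / e) ∣ k := by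
      rw [← orderOf_dvd_iff_pow_eq_one, hordz]
      constructor
      · intro h
        have h2 : e * (m / e) ∣ e * k := by rw [Nat.mul_div_cancel' hedvd]; exact h
        exact (Nat.mul_dvd_mul_iff_left he0).mp h2
      · intro h
        calc m = e * (m / e) := (Nat.mul_div_cancel' hedvd).symm
        _ ∣ e * k := Nat.mul_dvd_mul_left e h
    by_cases h1 : z ^ (e * k) = 1
    · rw [if_pos (hdvd_iff.mp h1)]
      simp [h1, Finset.card_range]
    · rw [if_neg (fun hc => h1 (hdvd_iff.mpr hc))]
      have hxN : (z ^ (e * k)) ^ (m / e) = 1 := by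
        rw [← pow_mul, ← orderOf_dvd_iff_pow_eq_one, hordz]
        exact ⟨k, by rw [mul_right_comm, Nat.mul_div_cancel' hedvd, mul_comm]⟩
      have := geom_sum_eq h1 (m / e)
      rw [this, hxN, sub_self, zero_div]
  rw [Finset.sum_congr rfl step5]
  -- step 6 : reindex d = m / e and restrict to divisors of gcd
  have step6 : ∑ e ∈ m.divisors, (μ e : ZMod p) * (if (m / e) ∣ k then ((m / e : ℕ) : ZMod p) else 0)
      = ∑ d ∈ m.divisors, (if d ∣ k then (μ (m / d) : ZMod p) * ((d : ℕ) : ZMod p) else 0) := by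
    rw [← Nat.sum_div_divisors m (fun d => if d ∣ k then (μ (m / d) : ZMod p) * ((d : ℕ) : ZMod p) else 0)]
    apply Finset.sum_congr rfl
    intro e he
    rw [Nat.mem_divisors] at he
    rw [Nat.div_div_self he.1 hm0.ne']
    split <;> simp [mul_ite]
  rw [step6]
  rw [← Finset.sum_filter, ← divisors_gcd_eq_s19 m k hm0]
end
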